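/- arXiv:1403.3946 — 7 statements merged into one kernel-verified Lean document; each statement's English description precedes it below -/
import Mathlib

section
/- The 'minus' continued fraction expansion of an irrational real number α, i.e. the expansion α = b₀ - 1/(b₁ - 1/(b₂ - ⋯)) with b₀ ∈ ℤ and bᵢ ∈ ℤ with bᵢ ≥ 2 for i ≥ 1, exists and is unique. -/
/-- The value of a finite 'minus' continued fraction `[[b₀; b₁, …, b_k]]
    = b₀ - 1/(b₁ - 1/(⋯ - 1/b_k))`.  (Division by zero in ℝ is 0, so the
    singleton case comes out right.) -/
noncomputable def mcfList : List ℤ → ℝ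
  | [] => 0
  | b :: l => (b : ℝ) - 1 / mcfList l

/-- The k-th convergent `[[b 0; b 1, …, b k]]` of the minus continued fraction
    with partial quotients `b`. -/
noncomputable def mcfConv (b : ℕ → ℤ) (k : ℕ) : ℝ :=
  mcfList ((List.range (k + 1)).map b)

open Filter


/-- finite minus continued fraction with a real number in the last slot -/
noncomputable def mval : List ℤ → ℝ → ℝ
  | [], x => x
  | b :: l, x => (b : ℝ) - 1 / mval l x

lemma mval_append (l : List ℤ) (a : ℤ) (x : ℝ) :
    mval (l ++ [a]) x = mval l ((a : ℝ) - 1 / x) := by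
  induction l with
  | nil => simp [mval]
  | cons b l ih => simp [mval, ih]

lemma mcfList_append (l : List ℤ) (a : ℤ) :
    mcfList (l ++ [a]) = mval l (a : ℝ) := by
  induction l with
  | nil => simp [mval, mcfList]
  | cons b l ih => simp [mval, mcfList, ih]

lemma mcfList_gt_one (l : List ℤ) (hne : l ≠ []) (h : ∀ a ∈ l, 2 ≤ a) : 1 < mcfList l := by
  induction l with
  | nil => exact absurd rfl hne
  | cons b l ih =>
    have hb : (2:ℝ) ≤ (b:ℝ) := by exact_mod_cast h b List.mem_cons_self
    cases l with
    | nil =>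
      show 1 < (b:ℝ) - 1 / mcfList []
      simp only [mcfList, div_zero]
      linarith
    | cons c l =>
      have h1 : 1 < mcfList (c :: l) :=
        ih (by simp) (fun a ha => h a (List.mem_cons_of_mem _ ha))
      have h2 : 0 < 1 / mcfList (c :: l) := by positivity
      have h3 : 1 / mcfList (c :: l) < 1 := by
        rw [div_lt_one (by linarith)]; linarith
      show 1 < (b:ℝ) - 1 / mcfList (c :: l)
      linarith

lemma one_lt_mcfConv (b : ℕ → ℤ) (hb : ∀ i, 2 ≤ b i) (k : ℕ) : 1 < mcfConv b k := by
  apply mcfList_gt_one _ (by simp)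
  intro a ha
  simp only [List.mem_map, List.mem_range] at ha
  obtain ⟨i, _, rfl⟩ := ha
  exact hb i

lemma mcfConv_succ (b : ℕ → ℤ) (k : ℕ) :
    mcfConv b (k + 1) = (b 0 : ℝ) - 1 / mcfConv (fun i => b (i + 1)) k := by
  unfold mcfConv
  rw [List.range_succ_eq_map]
  simp only [List.map_cons, List.map_map, mcfList]
  congr 2

lemma head_eq_ceil (α : ℝ) (hα : Irrational α) (b : ℕ → ℤ)
    (hb : ∀ i, 1 ≤ i → 2 ≤ b i)
    (ht : Tendsto (mcfConv b) atTop (nhds α)) : b 0 = ⌈α⌉ := by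
  have hsh : ∀ i, 2 ≤ b (i + 1) := fun i => hb (i + 1) (Nat.le_add_left 1 i)
  have h1 : ∀ k, 1 < mcfConv (fun i => b (i + 1)) k := one_lt_mcfConv _ hsh
  have hbounds : ∀ k, (b 0 : ℝ) - 1 < mcfConv b (k + 1) ∧ mcfConv b (k + 1) < b 0 := by
    intro k
    rw [mcfConv_succ]
    have hk := h1 k
    have hpos : 0 < 1 / mcfConv (fun i => b (i + 1)) k := by positivity
    have hlt : 1 / mcfConv (fun i => b (i + 1)) k < 1 := by
      rw [div_lt_one (by linarith)]; linarith
    constructor <;> linarith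
  have ht' : Tendsto (fun k => mcfConv b (k + 1)) atTop (nhds α) :=
    ht.comp (tendsto_add_atTop_nat 1)
  have hle : α ≤ (b 0 : ℝ) :=
    le_of_tendsto ht' (Eventually.of_forall fun k => (hbounds k).2.le)
  have hge : (b 0 : ℝ) - 1 ≤ α :=
    ge_of_tendsto ht' (Eventually.of_forall fun k => (hbounds k).1.le)
  have hne : ((b 0 : ℝ) - 1) ≠ α := by
    intro h
    exact hα.ne_int (b 0 - 1) (by push_cast; linarith)
  symm
  rw [Int.ceil_eq_iff]
  exact ⟨lt_of_le_of_ne hge hne, hle⟩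

lemma shift_tendsto (α : ℝ) (b : ℕ → ℤ)
    (hsh : ∀ i, 2 ≤ b (i + 1))
    (hne : (b 0 : ℝ) - α ≠ 0)
    (ht : Tendsto (mcfConv b) atTop (nhds α)) :
    Tendsto (mcfConv fun i => b (i + 1)) atTop (nhds (((b 0 : ℝ) - α)⁻¹)) := by
  have h1 : ∀ k, 1 < mcfConv (fun i => b (i + 1)) k := one_lt_mcfConv _ hsh
  have key : ∀ k, mcfConv (fun i => b (i + 1)) k = ((b 0 : ℝ) - mcfConv b (k + 1))⁻¹ := by
    intro k
    rw [mcfConv_succ, sub_sub_cancel, one_div, inv_inv]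
  have ht' : Tendsto (fun k => mcfConv b (k + 1)) atTop (nhds α) :=
    ht.comp (tendsto_add_atTop_nat 1)
  rw [show mcfConv (fun i => b (i + 1)) = (fun k => ((b 0 : ℝ) - mcfConv b (k + 1))⁻¹) from funext key]
  exact (tendsto_const_nhds.sub ht').inv₀ hne

lemma mcf_unique_aux : ∀ (i : ℕ) (α : ℝ), Irrational α → ∀ b c : ℕ → ℤ,
    (∀ j, 1 ≤ j → 2 ≤ b j) → Tendsto (mcfConv b) atTop (nhds α) →
    (∀ j, 1 ≤ j → 2 ≤ c j) → Tendsto (mcfConv c) atTop (nhds α) → b i = c i := by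
  intro i
  induction i with
  | zero =>
    intro α hα b c hb htb hc htc
    rw [head_eq_ceil α hα b hb htb, head_eq_ceil α hα c hc htc]
  | succ i ih =>
    intro α hα b c hb htb hc htc
    have hb0 := head_eq_ceil α hα b hb htb
    have hc0 := head_eq_ceil α hα c hc htc
    have hne : ((b 0 : ℝ)) - α ≠ 0 := sub_ne_zero.2 (Ne.symm (hα.ne_int (b 0)))
    have hα' : Irrational (((b 0 : ℝ) - α)⁻¹) := ((hα.intCast_sub (b 0)).inv)
    have hcb : (c 0 : ℝ) = (b 0 : ℝ) := by rw [hb0, hc0]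
    have htb' := shift_tendsto α b (fun i => hb (i + 1) (Nat.le_add_left 1 i)) hne htb
    have htc' := shift_tendsto α c (fun i => hc (i + 1) (Nat.le_add_left 1 i))
      (by rw [hcb]; exact hne) htc
    rw [hcb] at htc'
    exact ih (((b 0 : ℝ) - α)⁻¹) hα' (fun j => b (j + 1)) (fun j => c (j + 1))
      (fun j _ => hb (j + 1) (Nat.le_add_left 1 j)) htb'
      (fun j _ => hc (j + 1) (Nat.le_add_left 1 j)) htc'

noncomputable def aSeq (α : ℝ) : ℕ → ℝ
  | 0 => α
  | k + 1 => ((⌈aSeq α k⌉ : ℝ) - aSeq α k)⁻¹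

noncomputable def mcfB (α : ℝ) (k : ℕ) : ℤ := ⌈aSeq α k⌉

lemma aSeq_irrational (α : ℝ) (hα : Irrational α) : ∀ k, Irrational (aSeq α k)
  | 0 => hα
  | k + 1 => ((aSeq_irrational α hα k).intCast_sub _).inv

lemma one_lt_aSeq (α : ℝ) (hα : Irrational α) (k : ℕ) : 1 < aSeq α (k + 1) := by
  have h := aSeq_irrational α hα k
  have h1 : aSeq α k < (⌈aSeq α k⌉ : ℝ) :=
    lt_of_le_of_ne (Int.le_ceil _) (h.ne_int _)
  have h2 : (⌈aSeq α k⌉ : ℝ) < aSeq α k + 1 := Int.ceil_lt_add_one _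
  show 1 < ((⌈aSeq α k⌉ : ℝ) - aSeq α k)⁻¹
  rw [one_lt_inv_iff₀]
  constructor <;> linarith

lemma two_le_mcfB (α : ℝ) (hα : Irrational α) (i : ℕ) (hi : 1 ≤ i) : 2 ≤ mcfB α i := by
  obtain ⟨k, rfl⟩ : ∃ k, i = k + 1 := ⟨i - 1, by omega⟩
  have := one_lt_aSeq α hα k
  show 2 ≤ ⌈aSeq α (k + 1)⌉
  have : (1 : ℤ) < ⌈aSeq α (k + 1)⌉ := by
    rw [Int.lt_ceil]; exact_mod_cast this
  omega

lemma aSeq_eq (α : ℝ) (k : ℕ) :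
    aSeq α k = (mcfB α k : ℝ) - 1 / aSeq α (k + 1) := by
  show aSeq α k = (⌈aSeq α k⌉ : ℝ) - 1 / ((⌈aSeq α k⌉ : ℝ) - aSeq α k)⁻¹
  rw [one_div, inv_inv]
  ring

lemma mval_aSeq (α : ℝ) (_hα : Irrational α) :
    ∀ k, mval ((List.range k).map (mcfB α)) (aSeq α k) = α := by
  intro k
  induction k with
  | zero => simp [mval, aSeq]
  | succ k ih =>
    rw [List.range_succ, List.map_append, List.map_singleton, mval_append, ← aSeq_eq α k, ih]

/-- `mpq b k = ((p_{k-1}, p_k), (q_{k-1}, q_k))` of numerator/denominator recurrences. -/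
noncomputable def mpq (b : ℕ → ℤ) : ℕ → (ℝ × ℝ) × (ℝ × ℝ)
  | 0 => ((1, (b 0 : ℝ)), (0, 1))
  | k + 1 =>
    ((((mpq b k).1.2 : ℝ), (b (k + 1) : ℝ) * (mpq b k).1.2 - (mpq b k).1.1),
     (((mpq b k).2.2 : ℝ), (b (k + 1) : ℝ) * (mpq b k).2.2 - (mpq b k).2.1))

lemma mpq_q (b : ℕ → ℤ) (hb : ∀ i, 1 ≤ i → 2 ≤ b i) (k : ℕ) :
    1 ≤ (mpq b k).2.2 - (mpq b k).2.1 ∧ ((k : ℝ) + 1) ≤ (mpq b k).2.2 := by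
  induction k with
  | zero => simp [mpq]
  | succ k ih =>
    obtain ⟨h1, h2⟩ := ih
    have hbk : (2 : ℝ) ≤ (b (k + 1) : ℝ) := by exact_mod_cast hb (k + 1) (by omega)
    have hq : (0 : ℝ) < (mpq b k).2.2 := by
      have : (0 : ℝ) ≤ (k : ℝ) := Nat.cast_nonneg k
      linarith
    constructor
    · show 1 ≤ ((b (k + 1) : ℝ) * (mpq b k).2.2 - (mpq b k).2.1) - (mpq b k).2.2
      nlinarith
    · show ((k + 1 : ℕ) : ℝ) + 1 ≤ (b (k + 1) : ℝ) * (mpq b k).2.2 - (mpq b k).2.1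
      push_cast
      nlinarith

lemma mpq_det (b : ℕ → ℤ) (k : ℕ) :
    (mpq b k).1.2 * (mpq b k).2.1 - (mpq b k).1.1 * (mpq b k).2.2 = -1 := by
  induction k with
  | zero => simp [mpq]
  | succ k ih =>
    show ((b (k + 1) : ℝ) * (mpq b k).1.2 - (mpq b k).1.1) * (mpq b k).2.2
        - (mpq b k).1.2 * ((b (k + 1) : ℝ) * (mpq b k).2.2 - (mpq b k).2.1) = -1
    linear_combination ih

lemma den_pos (b : ℕ → ℤ) (hb : ∀ i, 1 ≤ i → 2 ≤ b i) (k : ℕ) {x : ℝ} (hx : 1 < x) :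
    0 < x * (mpq b k).2.2 - (mpq b k).2.1 := by
  obtain ⟨h1, h2⟩ := mpq_q b hb k
  have hq : (0 : ℝ) < (mpq b k).2.2 := by
    have : (0 : ℝ) ≤ (k : ℝ) := Nat.cast_nonneg k
    linarith
  nlinarith

lemma mval_formula (b : ℕ → ℤ) (hb : ∀ i, 1 ≤ i → 2 ≤ b i) :
    ∀ (k : ℕ) (x : ℝ), 1 < x →
      mval ((List.range (k + 1)).map b) x
        = (x * (mpq b k).1.2 - (mpq b k).1.1) / (x * (mpq b k).2.2 - (mpq b k).2.1) := by
  intro k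
  induction k with
  | zero =>
    intro x hx
    have hx0 : x ≠ 0 := by linarith
    show (b 0 : ℝ) - 1 / mval [] x = _
    show (b 0 : ℝ) - 1 / x = (x * (b 0 : ℝ) - 1) / (x * 1 - 0)
    field_simp
    ring
  | succ k ih =>
    intro x hx
    have hx0 : x ≠ 0 := by linarith
    have hy : 1 < (b (k + 1) : ℝ) - 1 / x := by
      have h2 : (2 : ℝ) ≤ (b (k + 1) : ℝ) := by exact_mod_cast hb (k + 1) (by omega)
      have ha : 0 < 1 / x := by positivity
      have hc : 1 / x < 1 := by rw [div_lt_one (by linarith)]; exact hx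
      linarith
    rw [List.range_succ, List.map_append, List.map_singleton, mval_append, ih _ hy]
    have hden : 0 < ((b (k + 1) : ℝ) - 1 / x) * (mpq b k).2.2 - (mpq b k).2.1 :=
      den_pos b hb k hy
    have hden2 : 0 < x * (mpq b (k + 1)).2.2 - (mpq b (k + 1)).2.1 := den_pos b hb (k + 1) hx
    show _ = (x * ((b (k + 1) : ℝ) * (mpq b k).1.2 - (mpq b k).1.1) - (mpq b k).1.2)
        / (x * ((b (k + 1) : ℝ) * (mpq b k).2.2 - (mpq b k).2.1) - (mpq b k).2.2)
    have hden2' : 0 < x * ((b (k + 1) : ℝ) * (mpq b k).2.2 - (mpq b k).2.1) - (mpq b k).2.2 :=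
      hden2
    rw [div_eq_div_iff (ne_of_gt hden) (ne_of_gt hden2')]
    field_simp
    ring

lemma conv_close (α : ℝ) (hα : Irrational α) (k : ℕ) :
    |mcfConv (mcfB α) (k + 1) - α| ≤ 1 / ((k : ℝ) + 2) := by
  set b := mcfB α with hbdef
  have hb : ∀ i, 1 ≤ i → 2 ≤ b i := two_le_mcfB α hα
  set p := (mpq b k).1.2 with hp
  set P := (mpq b k).1.1 with hP
  set q := (mpq b k).2.2 with hq
  set Q := (mpq b k).2.1 with hQ
  set x := aSeq α (k + 1) with hxdef
  have hx : 1 < x := one_lt_aSeq α hα k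
  have hy : 1 < (b (k + 1) : ℝ) := by
    have := hb (k + 1) (by omega)
    exact_mod_cast (by omega : (1 : ℤ) < b (k + 1))
  have hα_eq : α = (x * p - P) / (x * q - Q) := by
    rw [← mval_aSeq α hα (k + 1), mval_formula b hb k _ hx]
  have hconv : mcfConv b (k + 1) = ((b (k + 1) : ℝ) * p - P) / ((b (k + 1) : ℝ) * q - Q) := by
    unfold mcfConv
    rw [List.range_succ, List.map_append, List.map_singleton, mcfList_append,
      mval_formula b hb k _ hy]
  have hDa : 0 < x * q - Q := den_pos b hb k hx
  have hDb : 0 < (b (k + 1) : ℝ) * q - Q := den_pos b hb k hy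
  have hdet : p * Q - P * q = -1 := mpq_det b k
  have hdiff : mcfConv b (k + 1) - α
      = ((b (k + 1) : ℝ) - x) / (((b (k + 1) : ℝ) * q - Q) * (x * q - Q)) := by
    rw [hconv, hα_eq, div_sub_div _ _ (ne_of_gt hDb) (ne_of_gt hDa),
      div_eq_div_iff (by positivity) (by positivity)]
    linear_combination (((b (k + 1) : ℝ) * q - Q) * (x * q - Q)) * (x - (b (k + 1) : ℝ)) * hdet
  obtain ⟨h1, h2⟩ := mpq_q b hb k
  have hnum : |(b (k + 1) : ℝ) - x| ≤ 1 := by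
    have hle : x ≤ (b (k + 1) : ℝ) := by
      show x ≤ ((⌈aSeq α (k + 1)⌉ : ℤ) : ℝ)
      exact Int.le_ceil _
    have hlt : (b (k + 1) : ℝ) < x + 1 := by
      show ((⌈aSeq α (k + 1)⌉ : ℤ) : ℝ) < _
      exact Int.ceil_lt_add_one _
    rw [abs_le]
    constructor <;> linarith
  have hDb2 : (k : ℝ) + 2 ≤ (b (k + 1) : ℝ) * q - Q := by
    have h2b : (2 : ℝ) ≤ (b (k + 1) : ℝ) := by exact_mod_cast hb (k + 1) (by omega)
    nlinarith
  have hDa2 : 1 ≤ x * q - Q := by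
    have hq0 : (0 : ℝ) < q := by
      have : (0 : ℝ) ≤ (k : ℝ) := Nat.cast_nonneg k
      linarith
    nlinarith
  rw [hdiff, abs_div, abs_of_pos (mul_pos hDb hDa)]
  have hk2 : (0 : ℝ) < (k : ℝ) + 2 := by positivity
  apply div_le_div₀ zero_le_one hnum hk2
  nlinarith

/-- For every irrational real number α there is a unique sequence of integers
    `b₀, b₁, b₂, …` with `bᵢ ≥ 2` for `i ≥ 1` such that
    `α = lim_k [[b₀; b₁, …, b_k]]` (the 'minus' continued fraction expansion). -/
theorem minus_cf_exists_unique (α : ℝ) (hα : Irrational α) :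
    ∃! b : ℕ → ℤ, (∀ i, 1 ≤ i → 2 ≤ b i) ∧
      Filter.Tendsto (mcfConv b) Filter.atTop (nhds α) := by

  have hB1 : ∀ i, 1 ≤ i → 2 ≤ mcfB α i := two_le_mcfB α hα
  have hB2 : Tendsto (mcfConv (mcfB α)) atTop (nhds α) := by
    rw [tendsto_iff_dist_tendsto_zero]
    apply squeeze_zero (g := fun k : ℕ => 1 / ((k : ℝ) + 1)) (fun k => dist_nonneg)
    · intro k
      rw [Real.dist_eq]
      cases k with
      | zero =>
        have h0 : mcfConv (mcfB α) 0 = ((⌈α⌉ : ℤ) : ℝ) := by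
          simp [mcfConv, mcfList, mcfB, aSeq]
        rw [h0]
        have hle : α ≤ ((⌈α⌉ : ℤ) : ℝ) := Int.le_ceil α
        have hlt : ((⌈α⌉ : ℤ) : ℝ) < α + 1 := Int.ceil_lt_add_one α
        rw [abs_le]
        norm_num
        constructor <;> linarith
      | succ k =>
        have := conv_close α hα k
        have hcast : ((k + 1 : ℕ) : ℝ) + 1 = (k : ℝ) + 2 := by push_cast; ring
        rw [hcast]
        exact this
    · have : Tendsto (fun n : ℕ => ((n : ℝ) + 1)) atTop atTop :=
        tendsto_atTop_add_const_right _ 1 tendsto_natCast_atTop_atTop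
      exact this.inv_tendsto_atTop.congr (fun n => by simp [one_div])
  refine ⟨mcfB α, ⟨hB1, hB2⟩, ?_⟩
  intro c hc
  funext i
  exact mcf_unique_aux i α hα c (mcfB α) hc.1 hc.2 hB1 hB2
end

section
/- If the minus continued fraction expansion of an irrational α is related to its regular (plus) continued fraction expansion α = [a₀; a₁, a₂, …] (a₀ ∈ ℤ, aᵢ ∈ ℤ_{>0} for i ≥ 1), then as sequences (b₀, b₁, b₂, …) = (a₀+1, 2 repeated (a₁−1) times, a₂+2, 2 repeated (a₃−1) times, a₄+2, …). -/
/-- Value of a finite 'plus' (regular) continued fraction `[a₀; a₁, …, a_k]`. -/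
noncomputable def pcfList : List ℤ → ℝ
  | [] => 0
  | b :: l => (b : ℝ) + 1 / pcfList l

noncomputable def pcfConv (a : ℕ → ℤ) (k : ℕ) : ℝ :=
  pcfList ((List.range (k + 1)).map a)

/-- The first `1 + n` blocks of the sequence
    `(a₀+1, 2,…,2 (a₁−1 times), a₂+2, 2,…,2 (a₃−1 times), a₄+2, …)`. -/
def blockList (a : ℕ → ℤ) (n : ℕ) : List ℤ :=
  (a 0 + 1) :: (List.range n).flatMap
    (fun j => List.replicate (a (2 * j + 1) - 1).toNat 2 ++ [a (2 * j + 2) + 2])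

namespace MCFAux

open Filter Topology

def sh (f : ℕ → ℤ) : ℕ → ℤ := fun i => f (i + 1)

lemma range_map_succ (f : ℕ → ℤ) (k : ℕ) :
    (List.range (k + 1)).map f = f 0 :: (List.range k).map (sh f) := by
  rw [List.range_succ_eq_map, List.map_cons, List.map_map]
  rfl

lemma mcfConv_eq (f : ℕ → ℤ) (k : ℕ) :
    mcfConv f k = (f 0 : ℝ) - 1 / mcfList ((List.range k).map (sh f)) := by
  rw [mcfConv, range_map_succ, mcfList]

lemma pcfConv_eq (f : ℕ → ℤ) (k : ℕ) :
    pcfConv f k = (f 0 : ℝ) + 1 / pcfList ((List.range k).map (sh f)) := by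
  rw [pcfConv, range_map_succ, pcfList]

lemma mcfConv_succ (f : ℕ → ℤ) (k : ℕ) :
    mcfConv f (k + 1) = (f 0 : ℝ) - 1 / mcfConv (sh f) k := by
  rw [mcfConv_eq]; rfl

lemma pcfConv_succ (f : ℕ → ℤ) (k : ℕ) :
    pcfConv f (k + 1) = (f 0 : ℝ) + 1 / pcfConv (sh f) k := by
  rw [pcfConv_eq]; rfl

lemma pcfList_nonneg : ∀ l : List ℤ, (∀ x ∈ l, 1 ≤ x) → 0 ≤ pcfList l
  | [], _ => le_refl 0
  | x :: t, h => by
    have hx : (1:ℝ) ≤ (x:ℝ) := by exact_mod_cast h x (List.mem_cons_self (a := x) (l := t))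
    have ht := pcfList_nonneg t (fun y hy => h y (List.mem_cons_of_mem _ hy))
    have h2 : 0 ≤ 1 / pcfList t := by positivity
    show 0 ≤ (x:ℝ) + 1 / pcfList t
    linarith

lemma pcfList_one_le : ∀ l : List ℤ, (∀ x ∈ l, 1 ≤ x) → l ≠ [] → 1 ≤ pcfList l
  | [], _, h => absurd rfl h
  | x :: t, h, _ => by
    have hx : (1:ℝ) ≤ (x:ℝ) := by exact_mod_cast h x (List.mem_cons_self (a := x) (l := t))
    have ht := pcfList_nonneg t (fun y hy => h y (List.mem_cons_of_mem _ hy))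
    have h2 : 0 ≤ 1 / pcfList t := by positivity
    show 1 ≤ (x:ℝ) + 1 / pcfList t
    linarith

lemma pcfList_mem (x : ℤ) (t : List ℤ) (ht : ∀ y ∈ t, 1 ≤ y) :
    (x:ℝ) ≤ pcfList (x :: t) ∧ pcfList (x :: t) ≤ (x:ℝ) + 1 := by
  have ht0 := pcfList_nonneg t ht
  have h2 : 0 ≤ 1 / pcfList t := by positivity
  have h3 : 1 / pcfList t ≤ 1 := by
    rcases eq_or_ne t [] with rfl | hne
    · show 1 / pcfList [] ≤ 1
      norm_num [pcfList]
    · have h1 := pcfList_one_le t ht hne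
      rw [div_le_one (by linarith)]
      linarith
  constructor
  · show (x:ℝ) ≤ (x:ℝ) + 1 / pcfList t
    linarith
  · show (x:ℝ) + 1 / pcfList t ≤ (x:ℝ) + 1
    linarith

lemma mcfList_gt_one : ∀ l : List ℤ, (∀ x ∈ l, 2 ≤ x) → l ≠ [] → 1 < mcfList l
  | [], _, h => absurd rfl h
  | x :: t, h, _ => by
    have hx : (2:ℝ) ≤ (x:ℝ) := by exact_mod_cast h x (List.mem_cons_self (a := x) (l := t))
    show 1 < (x:ℝ) - 1 / mcfList t
    rcases eq_or_ne t [] with rfl | hne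
    · norm_num [mcfList]; linarith
    · have h1 := mcfList_gt_one t (fun y hy => h y (List.mem_cons_of_mem _ hy)) hne
      have h2 : 0 < 1 / mcfList t := by positivity
      have h3 : 1 / mcfList t < 1 := by rw [div_lt_one (by linarith)]; linarith
      linarith

lemma mcfList_mem (x : ℤ) (t : List ℤ) (ht : ∀ y ∈ t, 2 ≤ y) :
    (x:ℝ) - 1 ≤ mcfList (x :: t) ∧ mcfList (x :: t) ≤ (x:ℝ) := by
  have h2 : 0 ≤ 1 / mcfList t ∧ 1 / mcfList t ≤ 1 := by
    rcases eq_or_ne t [] with rfl | hne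
    · norm_num [mcfList]
    · have h1 := mcfList_gt_one t ht hne
      constructor
      · positivity
      · rw [div_le_one (by linarith)]; linarith
  constructor
  · show (x:ℝ) - 1 ≤ (x:ℝ) - 1 / mcfList t
    linarith [h2.2]
  · show (x:ℝ) - 1 / mcfList t ≤ (x:ℝ)
    linarith [h2.1]

lemma mcfConv_bounds (b : ℕ → ℤ) (hb : ∀ i, 1 ≤ i → 2 ≤ b i) (k : ℕ) :
    (b 0 : ℝ) - 1 ≤ mcfConv b k ∧ mcfConv b k ≤ (b 0 : ℝ) := by
  rw [mcfConv, range_map_succ]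
  exact mcfList_mem _ _ (by
    intro y hy
    simp only [List.mem_map, List.mem_range] at hy
    obtain ⟨i, -, rfl⟩ := hy
    exact hb (i+1) (by omega))

lemma pcfConv_bounds (a : ℕ → ℤ) (ha : ∀ i, 1 ≤ i → 1 ≤ a i) (k : ℕ) :
    (a 0 : ℝ) ≤ pcfConv a k ∧ pcfConv a k ≤ (a 0 : ℝ) + 1 := by
  rw [pcfConv, range_map_succ]
  exact pcfList_mem _ _ (by
    intro y hy
    simp only [List.mem_map, List.mem_range] at hy
    obtain ⟨i, -, rfl⟩ := hy
    exact ha (i+1) (by omega))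

lemma b0_eq {α : ℝ} (hα : Irrational α) {a b : ℕ → ℤ}
    (ha : ∀ i, 1 ≤ i → 1 ≤ a i) (haconv : Tendsto (pcfConv a) atTop (𝓝 α))
    (hb : ∀ i, 1 ≤ i → 2 ≤ b i) (hbconv : Tendsto (mcfConv b) atTop (𝓝 α)) :
    b 0 = a 0 + 1 := by
  have h1 : (a 0 : ℝ) ≤ α :=
    ge_of_tendsto haconv (Eventually.of_forall fun k => (pcfConv_bounds a ha k).1)
  have h2 : α ≤ (a 0 : ℝ) + 1 :=
    le_of_tendsto haconv (Eventually.of_forall fun k => (pcfConv_bounds a ha k).2)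
  have h3 : (b 0 : ℝ) - 1 ≤ α :=
    ge_of_tendsto hbconv (Eventually.of_forall fun k => (mcfConv_bounds b hb k).1)
  have h4 : α ≤ (b 0 : ℝ) :=
    le_of_tendsto hbconv (Eventually.of_forall fun k => (mcfConv_bounds b hb k).2)
  have e2 : α ≠ ((a 0 + 1 : ℤ) : ℝ) := hα.ne_int _
  have e4 : α ≠ ((b 0 : ℤ) : ℝ) := hα.ne_int _
  push_cast at e2
  have i1 : (a 0 : ℝ) < (b 0 : ℝ) := lt_of_le_of_lt h1 (lt_of_le_of_ne h4 e4)
  have i2 : (b 0 : ℝ) - 1 < (a 0 : ℝ) + 1 := lt_of_le_of_lt h3 (lt_of_le_of_ne h2 e2)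
  have j1 : a 0 < b 0 := by exact_mod_cast i1
  have j2 : ((b 0 - 1 : ℤ) : ℝ) < ((a 0 + 1 : ℤ) : ℝ) := by push_cast; linarith
  have j2' : b 0 - 1 < a 0 + 1 := by exact_mod_cast j2
  omega

lemma mcf_shift {α : ℝ} {b : ℕ → ℤ}
    (hconv : Tendsto (mcfConv b) atTop (𝓝 α)) (hne : (b 0 : ℝ) ≠ α) :
    Tendsto (mcfConv (sh b)) atTop (𝓝 (((b 0 : ℝ) - α)⁻¹)) := by
  have heq : ∀ k, mcfConv (sh b) k = ((b 0 : ℝ) - mcfConv b (k + 1))⁻¹ := by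
    intro k
    rw [mcfConv_succ, sub_sub_cancel, one_div, inv_inv]
  have h1 : Tendsto (fun k => mcfConv b (k + 1)) atTop (𝓝 α) :=
    hconv.comp (tendsto_add_atTop_nat 1)
  exact ((tendsto_const_nhds.sub h1).inv₀ (sub_ne_zero.2 hne)).congr
    fun k => (heq k).symm

lemma pcf_shift {α : ℝ} {a : ℕ → ℤ}
    (hconv : Tendsto (pcfConv a) atTop (𝓝 α)) (hne : α ≠ (a 0 : ℝ)) :
    Tendsto (pcfConv (sh a)) atTop (𝓝 ((α - (a 0 : ℝ))⁻¹)) := by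
  have heq : ∀ k, pcfConv (sh a) k = (pcfConv a (k + 1) - (a 0 : ℝ))⁻¹ := by
    intro k
    rw [pcfConv_succ, add_sub_cancel_left, one_div, inv_inv]
  have h1 : Tendsto (fun k => pcfConv a (k + 1)) atTop (𝓝 α) :=
    hconv.comp (tendsto_add_atTop_nat 1)
  exact ((h1.sub tendsto_const_nhds).inv₀ (sub_ne_zero.2 hne)).congr
    fun k => (heq k).symm

lemma pcfConv_head {f g : ℕ → ℤ} (h : sh f = sh g) (k : ℕ) :
    pcfConv f k = (f 0 : ℝ) - (g 0 : ℝ) + pcfConv g k := by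
  rw [pcfConv_eq, pcfConv_eq, h]; ring

def T (a : ℕ → ℤ) : ℕ → ℤ :=
  if 2 ≤ a 1 then fun i => if i = 0 then 1 else if i = 1 then a 1 - 1 else a i
  else fun i => if i = 0 then a 2 + 1 else a (i + 2)

lemma T_ge (a : ℕ → ℤ) (ha : ∀ i, 1 ≤ i → 1 ≤ a i) : ∀ i, 1 ≤ i → 1 ≤ T a i := by
  intro i hi
  unfold T
  by_cases h1 : 2 ≤ a 1
  · rw [if_pos h1]
    by_cases h0 : i = 0
    · simp [h0]
    by_cases h2 : i = 1
    · simp [h0, h2]; omega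
    · simp [h0, h2]; exact ha i hi
  · rw [if_neg h1]
    by_cases h0 : i = 0
    · simp [h0]; have := ha 2 (by omega); omega
    · simp [h0]; exact ha (i + 2) (by omega)

lemma T_tendsto {α : ℝ} (hα : Irrational α) {a : ℕ → ℤ} (ha : ∀ i, 1 ≤ i → 1 ≤ a i)
    (haconv : Tendsto (pcfConv a) atTop (𝓝 α)) :
    Tendsto (pcfConv (T a)) atTop (𝓝 (((a 0 : ℝ) + 1 - α)⁻¹)) := by
  have hβconv : Tendsto (pcfConv (sh a)) atTop (𝓝 ((α - (a 0 : ℝ))⁻¹)) :=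
    pcf_shift haconv (hα.ne_int _)
  set β : ℝ := (α - (a 0 : ℝ))⁻¹ with hβdef
  have hβirr : Irrational β := (hα.sub_intCast (a 0)).inv
  have hβ1 : β - 1 ≠ 0 := sub_ne_zero.2 (by exact_mod_cast hβirr.ne_int 1)
  have hαa : α - (a 0 : ℝ) ≠ 0 := sub_ne_zero.2 (hα.ne_int _)
  have hne : (a 0 : ℝ) + 1 - α ≠ 0 := by
    have := hα.ne_int (a 0 + 1)
    push_cast at this
    intro h; apply this; linarith
  have hne' : 1 - α + (a 0 : ℝ) ≠ 0 := fun h => hne (by linarith)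
  have hfin : (1 : ℝ) + (β - 1)⁻¹ = ((a 0 : ℝ) + 1 - α)⁻¹ := by
    have hx : β - 1 = ((a 0 : ℝ) + 1 - α) / (α - (a 0 : ℝ)) := by
      rw [hβdef]
      field_simp
      ring
    rw [hx, inv_div]
    field_simp
    ring
  by_cases h1 : 2 ≤ a 1
  · have hT : T a = fun i => if i = 0 then 1 else if i = 1 then a 1 - 1 else a i :=
      if_pos h1
    have hsh : sh (sh (T a)) = sh (sh a) := by
      funext i; simp [sh, hT]
    have hhead : ∀ k, pcfConv (sh (T a)) k = pcfConv (sh a) k - 1 := by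
      intro k
      rw [pcfConv_head (f := sh (T a)) (g := sh a) hsh k]
      simp only [sh, hT]
      push_cast
      ring
    have h2 : Tendsto (pcfConv (sh (T a))) atTop (𝓝 (β - 1)) :=
      (hβconv.sub tendsto_const_nhds).congr fun k => (hhead k).symm
    have h3 : Tendsto (fun k => pcfConv (T a) (k + 1)) atTop (𝓝 (1 + (β - 1)⁻¹)) := by
      refine ((tendsto_const_nhds (x := (1:ℝ))).add (h2.inv₀ hβ1)).congr ?_
      intro k
      rw [pcfConv_succ]
      simp [hT, one_div]
    rw [← hfin]
    exact (tendsto_add_atTop_iff_nat 1).1 h3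
  · have ha1 : a 1 = 1 := by have := ha 1 le_rfl; omega
    have hT : T a = fun i => if i = 0 then a 2 + 1 else a (i + 2) := if_neg h1
    have hβ2 : Tendsto (pcfConv (sh (sh a))) atTop (𝓝 ((β - ((sh a) 0 : ℝ))⁻¹)) :=
      pcf_shift hβconv (hβirr.ne_int _)
    have hsh0 : ((sh a) 0 : ℝ) = 1 := by simp [sh, ha1]
    rw [hsh0] at hβ2
    have hsh : sh (T a) = sh (sh (sh a)) := by
      funext i; simp [sh, hT]
    have hhead : ∀ k, pcfConv (T a) k = 1 + pcfConv (sh (sh a)) k := by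
      intro k
      rw [pcfConv_head (f := T a) (g := sh (sh a)) hsh k]
      simp only [sh, hT]
      push_cast
      ring
    have h3 : Tendsto (pcfConv (T a)) atTop (𝓝 (1 + (β - 1)⁻¹)) :=
      ((tendsto_const_nhds (x := (1:ℝ))).add hβ2).congr fun k => (hhead k).symm
    rw [← hfin]
    exact h3

def F (a : ℕ → ℤ) (j : ℕ) : List ℤ :=
  List.replicate (a (2 * j + 1) - 1).toNat 2 ++ [a (2 * j + 2) + 2]

lemma blockList_def (a : ℕ → ℤ) (n : ℕ) :
    blockList a n = (a 0 + 1) :: (List.range n).flatMap (F a) := rfl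

lemma flatMap_range_succ (G : ℕ → List ℤ) (n : ℕ) :
    (List.range (n + 1)).flatMap G = G 0 ++ (List.range n).flatMap (fun j => G (j + 1)) := by
  rw [List.range_succ_eq_map, List.flatMap_cons, List.flatMap_map]

lemma blockList_succ (a : ℕ → ℤ) (n : ℕ) (ha1 : 1 ≤ a 1) :
    blockList a (n + 1) = (a 0 + 1) :: blockList (T a) (if 2 ≤ a 1 then n + 1 else n) := by
  by_cases h1 : 2 ≤ a 1
  · rw [if_pos h1]
    have hT : T a = fun i => if i = 0 then 1 else if i = 1 then a 1 - 1 else a i :=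
      if_pos h1
    have hTa : ∀ m, 2 ≤ m → T a m = a m := by
      intro m hm
      rw [hT]
      simp only
      rw [if_neg (by omega), if_neg (by omega)]
    have hT0 : T a 0 + 1 = 2 := by simp [hT]
    have hT1 : T a 1 = a 1 - 1 := by simp [hT]
    have hF0 : F a 0 = 2 :: F (T a) 0 := by
      unfold F
      rw [hT1, hTa 2 le_rfl]
      have hcnt : (a (2 * 0 + 1) - 1).toNat = (a (2 * 0 + 1) - 1 - 1).toNat + 1 := by
        show (a 1 - 1).toNat = (a 1 - 1 - 1).toNat + 1
        omega
      rw [hcnt, List.replicate_succ]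
      rfl
    have hFs : (fun j => F a (j + 1)) = fun j => F (T a) (j + 1) := by
      funext j
      unfold F
      rw [hTa (2 * (j + 1) + 1) (by omega), hTa (2 * (j + 1) + 2) (by omega)]
    rw [blockList_def, blockList_def, flatMap_range_succ, flatMap_range_succ, hT0, hF0,
      hFs]
    rfl
  · have ha1' : a 1 = 1 := by omega
    rw [if_neg h1]
    have hT : T a = fun i => if i = 0 then a 2 + 1 else a (i + 2) := if_neg h1
    have hT0 : T a 0 + 1 = a 2 + 2 := by simp [hT]; ring
    have hTa : ∀ m, m ≠ 0 → T a m = a (m + 2) := by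
      intro m hm
      rw [hT]
      simp only
      rw [if_neg hm]
    have hF0 : F a 0 = [a 2 + 2] := by
      unfold F
      have : (a (2 * 0 + 1) - 1).toNat = 0 := by
        show (a 1 - 1).toNat = 0
        omega
      rw [this]
      rfl
    have hFs : F (T a) = fun j => F a (j + 1) := by
      funext j
      unfold F
      rw [hTa (2 * j + 1) (by omega), hTa (2 * j + 2) (by omega)]
      have e1 : 2 * j + 1 + 2 = 2 * (j + 1) + 1 := by ring
      have e2 : 2 * j + 2 + 2 = 2 * (j + 1) + 2 := by ring
      rw [e1, e2]
    rw [blockList_def, blockList_def, flatMap_range_succ, hF0, hFs, hT0]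
    rfl

lemma main : ∀ m : ℕ, ∀ (α : ℝ) (a b : ℕ → ℤ) (n : ℕ), Irrational α →
    (∀ i, 1 ≤ i → 1 ≤ a i) → Tendsto (pcfConv a) atTop (𝓝 α) →
    (∀ i, 1 ≤ i → 2 ≤ b i) → Tendsto (mcfConv b) atTop (𝓝 α) →
    (blockList a n).length = m →
    (List.range (blockList a n).length).map b = blockList a n := by
  intro m
  induction m using Nat.strong_induction_on with
  | _ m IH =>
    intro α a b n hα ha haconv hb hbconv hm
    have hb0 : b 0 = a 0 + 1 := b0_eq hα ha haconv hb hbconv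
    cases n with
    | zero =>
      have h0 : blockList a 0 = [a 0 + 1] := by
        rw [blockList_def]
        rfl
      rw [h0]
      simp [List.range_succ, hb0]
    | succ n =>
      have hbl : blockList a (n + 1)
          = (a 0 + 1) :: blockList (T a) (if 2 ≤ a 1 then n + 1 else n) :=
        blockList_succ a n (ha 1 le_rfl)
      set n' := if 2 ≤ a 1 then n + 1 else n with hn'
      set α' : ℝ := (((a 0 : ℝ)) + 1 - α)⁻¹ with hα'def
      have hα'irr : Irrational α' := by
        have h := (hα.intCast_sub (a 0 + 1)).inv
        have e : ((a 0 + 1 : ℤ) : ℝ) - α = (a 0 : ℝ) + 1 - α := by push_cast; ring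
        rwa [e] at h
      have hTconv : Tendsto (pcfConv (T a)) atTop (𝓝 α') := T_tendsto hα ha haconv
      have hshconv : Tendsto (mcfConv (sh b)) atTop (𝓝 α') := by
        have h := mcf_shift hbconv ((hα.ne_int (b 0)).symm)
        have e : ((b 0 : ℤ) : ℝ) - α = (a 0 : ℝ) + 1 - α := by
          rw [hb0]; push_cast; ring
        rwa [e] at h
      have hlt : (blockList (T a) n').length < m := by
        rw [hbl] at hm
        simp only [List.length_cons] at hm
        omega
      have hrec := IH (blockList (T a) n').length hlt α' (T a) (sh b) n' hα'irr
        (T_ge a ha) hTconv (fun i _ => hb (i + 1) (by omega)) hshconv rfl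
      rw [hbl, List.length_cons, range_map_succ, hb0, hrec]

end MCFAux

/-- If `α` is irrational with regular ('plus') continued fraction expansion
    `α = [a₀; a₁, a₂, …]` (`aᵢ ≥ 1` for `i ≥ 1`) and minus continued fraction
    expansion `α = [[b₀; b₁, b₂, …]]` (`bᵢ ≥ 2` for `i ≥ 1`), then as sequences
    `(b₀, b₁, …) = (a₀+1, 2 (a₁−1 times), a₂+2, 2 (a₃−1 times), a₄+2, …)`. -/
theorem minus_cf_from_plus_cf (α : ℝ) (hα : Irrational α) (a b : ℕ → ℤ)
    (ha : ∀ i, 1 ≤ i → 1 ≤ a i)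
    (haconv : Filter.Tendsto (pcfConv a) Filter.atTop (nhds α))
    (hb : ∀ i, 1 ≤ i → 2 ≤ b i)
    (hbconv : Filter.Tendsto (mcfConv b) Filter.atTop (nhds α)) :
    ∀ n, (List.range (blockList a n).length).map b = blockList a n := fun n =>
  MCFAux.main (blockList a n).length α a b n hα ha haconv hb hbconv rfl
end

section
/- A real quadratic irrational ϖ with Galois conjugate ϖ′ satisfies ϖ > 1 > ϖ′ > 0 if and only if its minus continued fraction expansion is purely periodic. -/
open Real Filter

namespace MCF

noncomputable def F : List ℤ → ℝ → ℝ
  | [], t => t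
  | a :: l, t => (a : ℝ) - 1 / F l t

@[simp] lemma F_nil (t : ℝ) : F [] t = t := rfl
@[simp] lemma F_cons (a : ℤ) (l : List ℤ) (t : ℝ) : F (a :: l) t = (a:ℝ) - 1 / F l t := rfl

lemma F_append (l₁ l₂ : List ℤ) (t : ℝ) : F (l₁ ++ l₂) t = F l₁ (F l₂ t) := by
  induction l₁ with
  | nil => rfl
  | cons a l ih => simp [ih]

lemma mcfList_eq_F (l : List ℤ) : mcfList l = F l 0 := by
  induction l with
  | nil => rfl
  | cons a l ih => simp [mcfList, ih]

lemma F_gt_one {l : List ℤ} {t : ℝ} (hl : ∀ a ∈ l, 2 ≤ a) (ht : 1 < t) : 1 < F l t := by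
  induction l with
  | nil => exact ht
  | cons a l ih =>
    have h1 : 1 < F l t := ih fun x hx => hl x (List.mem_cons_of_mem _ hx)
    have ha : (2:ℝ) ≤ a := by exact_mod_cast hl a (List.mem_cons_self)
    have h2 : 0 < F l t := by linarith
    have : 1 / F l t < 1 := by rw [div_lt_one h2]; linarith
    have : 0 < 1 / F l t := by positivity
    simp only [F_cons]; linarith

lemma F_lipschitz {l : List ℤ} (hl : ∀ a ∈ l, 2 ≤ a) {u v : ℝ} (hu : 1 < u) (hv : 1 < v) :
    |F l u - F l v| ≤ |u - v| := by
  induction l with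
  | nil => simp
  | cons a l ih =>
    have hl' : ∀ x ∈ l, 2 ≤ x := fun x hx => hl x (List.mem_cons_of_mem _ hx)
    have h1 : 1 < F l u := F_gt_one hl' hu
    have h2 : 1 < F l v := F_gt_one hl' hv
    have ihh := ih hl'
    have key : F (a :: l) u - F (a :: l) v = (F l u - F l v) / (F l u * F l v) := by
      simp only [F_cons]
      field_simp
      ring
    rw [key, abs_div]
    have hm : 1 < F l u * F l v := by nlinarith
    have : |F l u - F l v| / |F l u * F l v| ≤ |F l u - F l v| := by
      rw [abs_of_pos (by linarith : (0:ℝ) < F l u * F l v)]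
      apply div_le_self (abs_nonneg _) (by linarith)
    linarith

noncomputable def mat : List ℤ → ℤ × ℤ × ℤ × ℤ
  | [] => (1, 0, 0, -1)
  | a :: l =>
    ((a * (mat l).1 - (mat l).2.2.1, a * (mat l).2.1 - (mat l).2.2.2, (mat l).1, (mat l).2.1))

lemma mat_cons (a : ℤ) (l : List ℤ) {A B C D : ℤ} (h : mat l = (A, B, C, D)) :
    mat (a :: l) = (a * A - C, a * B - D, A, B) := by
  rw [mat, h]

/-- invariants for nonempty lists with entries ≥ 2 -/
lemma mat_inv {l : List ℤ} (hne : l ≠ []) (hl : ∀ a ∈ l, 2 ≤ a)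
    {A B C D : ℤ} (h : mat l = (A, B, C, D)) :
    0 ≤ D ∧ D + 1 ≤ C ∧ 1 ≤ B ∧ D ≤ B ∧ B + 1 ≤ A ∧ C - D ≤ A - B := by
  induction l generalizing A B C D with
  | nil => exact absurd rfl hne
  | cons a l ih =>
    have ha : 2 ≤ a := hl a (List.mem_cons_self)
    cases l with
    | nil =>
      have : mat [a] = (a, 1, 1, 0) := by rw [mat_cons a [] rfl]; norm_num
      rw [this] at h
      obtain ⟨rfl, rfl, rfl, rfl⟩ : (a:ℤ) = A ∧ (1:ℤ) = B ∧ (1:ℤ) = C ∧ (0:ℤ) = D := by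
        simpa [Prod.ext_iff] using h
      omega
    | cons b l' =>
      have hl' : ∀ x ∈ b :: l', 2 ≤ x := fun x hx => hl x (List.mem_cons_of_mem _ hx)
      rcases hM : mat (b :: l') with ⟨A', B', C', D'⟩
      obtain ⟨i1, i2, i3, i4, i5, i6⟩ := ih (by simp) hl' hM
      rw [mat_cons a _ hM] at h
      obtain ⟨rfl, rfl, rfl, rfl⟩ : a * A' - C' = A ∧ a * B' - D' = B ∧ A' = C ∧ B' = D := by
        simpa [Prod.ext_iff] using h
      refine ⟨by nlinarith, by nlinarith, by nlinarith, by nlinarith, by nlinarith, by nlinarith⟩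

lemma F_mat {l : List ℤ} (hne : l ≠ []) (hl : ∀ a ∈ l, 2 ≤ a) {t : ℝ} (ht : 1 < t)
    {A B C D : ℤ} (h : mat l = (A, B, C, D)) :
    F l t = ((A:ℝ) * t - B) / ((C:ℝ) * t - D) ∧
      0 < (C:ℝ) * t - D ∧ ((C:ℝ) * t - D) < (A:ℝ) * t - B := by
  induction l generalizing A B C D with
  | nil => exact absurd rfl hne
  | cons a l ih =>
    have ha : (2:ℤ) ≤ a := hl a (List.mem_cons_self)
    have ha' : (2:ℝ) ≤ (a:ℝ) := by exact_mod_cast ha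
    cases l with
    | nil =>
      have hm : mat [a] = (a, 1, 1, 0) := by rw [mat_cons a [] rfl]; norm_num
      rw [hm] at h
      obtain ⟨rfl, rfl, rfl, rfl⟩ : (a:ℤ) = A ∧ (1:ℤ) = B ∧ (1:ℤ) = C ∧ (0:ℤ) = D := by
        simpa [Prod.ext_iff] using h
      have ht0 : t ≠ 0 := by linarith
      refine ⟨by push_cast; simp only [F_cons, F_nil]; field_simp; ring, by push_cast; linarith, by push_cast; nlinarith⟩
    | cons b l' =>
      have hl' : ∀ x ∈ b :: l', 2 ≤ x := fun x hx => hl x (List.mem_cons_of_mem _ hx)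
      rcases hM : mat (b :: l') with ⟨A', B', C', D'⟩
      obtain ⟨e1, e2, e3⟩ := ih (by simp) hl' hM
      rw [mat_cons a _ hM] at h
      obtain ⟨rfl, rfl, rfl, rfl⟩ : a * A' - C' = A ∧ a * B' - D' = B ∧ A' = C ∧ B' = D := by
        simpa [Prod.ext_iff] using h
      have hden : (0:ℝ) < (A':ℝ) * t - B' := lt_trans e2 e3
      have hden' : ((A':ℝ) * t - B') ≠ 0 := ne_of_gt hden
      refine ⟨?_, by push_cast; linarith, ?_⟩
      · simp only [F_cons, e1, one_div_div]
        push_cast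
        rw [eq_div_iff hden', sub_mul, div_mul_cancel₀ _ hden']
        ring
      · push_cast
        nlinarith [e2, e3, ha']


noncomputable def wr (D P Q : ℤ) : ℝ := ((P:ℝ) + Real.sqrt (D:ℝ)) / (Q:ℝ)
noncomputable def wc (D P Q : ℤ) : ℝ := ((P:ℝ) - Real.sqrt (D:ℝ)) / (Q:ℝ)

structure Red (D P Q : ℤ) : Prop where
  qpos : 0 < Q
  dvd : Q ∣ P ^ 2 - D
  w_gt : 1 < wr D P Q
  c_pos : 0 < wc D P Q
  c_lt : wc D P Q < 1

lemma sqrtD_irr {D : ℤ} (hDn : ¬IsSquare D) (hD0 : 0 < D) : Irrational (Real.sqrt (D:ℝ)) :=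
  (irrational_sqrt_intCast_iff_of_nonneg hD0.le).2 hDn

lemma sqrtD_pos {D : ℤ} (hD0 : 0 < D) : 0 < Real.sqrt (D:ℝ) :=
  Real.sqrt_pos.2 (by exact_mod_cast hD0)

lemma sqrtD_sq {D : ℤ} (hD0 : 0 < D) : Real.sqrt (D:ℝ) ^ 2 = (D:ℝ) :=
  Real.sq_sqrt (by exact_mod_cast hD0.le)

lemma wr_irr {D : ℤ} (hDn : ¬IsSquare D) (hD0 : 0 < D) {P Q : ℤ} (hQ : Q ≠ 0) :
    Irrational (wr D P Q) := by
  have h1 : Irrational ((P:ℝ) + Real.sqrt (D:ℝ)) := (sqrtD_irr hDn hD0).intCast_add P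
  simpa [wr] using h1.div_intCast hQ

lemma wc_irr {D : ℤ} (hDn : ¬IsSquare D) (hD0 : 0 < D) {P Q : ℤ} (hQ : Q ≠ 0) :
    Irrational (wc D P Q) := by
  have h1 : Irrational ((P:ℝ) - Real.sqrt (D:ℝ)) := by
    have := ((sqrtD_irr hDn hD0).neg.intCast_add P)
    simpa [sub_eq_add_neg] using this
  simpa [wc] using h1.div_intCast hQ

noncomputable def bst (D P Q : ℤ) : ℤ := ⌈wr D P Q⌉
noncomputable def stepP (D P Q : ℤ) : ℤ := bst D P Q * Q - P
noncomputable def stepQ (D P Q : ℤ) : ℤ := (stepP D P Q ^ 2 - D) / Q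

lemma step_red {D : ℤ} (hDn : ¬IsSquare D) (hD0 : 0 < D) {P Q : ℤ} (h : Red D P Q) :
    Red D (stepP D P Q) (stepQ D P Q) ∧
      Q * stepQ D P Q = stepP D P Q ^ 2 - D ∧
      2 ≤ bst D P Q ∧
      wr D (stepP D P Q) (stepQ D P Q) = 1 / (bst D P Q - wr D P Q) ∧
      wc D (stepP D P Q) (stepQ D P Q) = 1 / (bst D P Q - wc D P Q) := by
  obtain ⟨hQ, hdvd, hw, hc0, hc1⟩ := h
  set b := bst D P Q with hb
  set P' := stepP D P Q with hP'
  set Q' := stepQ D P Q with hQ'def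
  have hQR : (0:ℝ) < (Q:ℝ) := by exact_mod_cast hQ
  have hirr := wr_irr hDn hD0 (P := P) (ne_of_gt hQ)
  have hs2 := sqrtD_sq (D := D) hD0
  have hsp := sqrtD_pos (D := D) hD0
  -- ceiling facts
  have hwb : wr D P Q < b := lt_of_le_of_ne (Int.le_ceil _) (hirr.ne_int b)
  have hwb' : (b:ℝ) - 1 < wr D P Q := by
    have h2 : ((⌈wr D P Q⌉ : ℤ) : ℝ) < wr D P Q + 1 := Int.ceil_lt_add_one (wr D P Q)
    have h3 : (b:ℝ) = ((⌈wr D P Q⌉ : ℤ) : ℝ) := by rw [hb, bst]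
    linarith
  have hb2 : 2 ≤ b := by
    have h1 : (1:ℝ) < (b:ℝ) := lt_trans hw hwb
    have : (1:ℤ) < b := by exact_mod_cast h1
    omega
  -- divisibility of the new numerator
  have hdvd' : Q ∣ P' ^ 2 - D := by
    have : P' ^ 2 - D = Q * (b ^ 2 * Q - 2 * b * P) + (P ^ 2 - D) := by
      rw [hP', stepP, ← hb]; ring
    rw [this]
    exact dvd_add (Dvd.intro _ rfl) hdvd
  have hQQ' : Q * Q' = P' ^ 2 - D := by
    rw [hQ'def, stepQ, ← hP']
    exact Int.mul_ediv_cancel' hdvd'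
  -- P'^2 ≠ D
  have hPD : P' ^ 2 - D ≠ 0 := by
    intro hcon
    exact hDn ⟨P', by nlinarith [hcon]⟩
  have hQ'0 : Q' ≠ 0 := by
    intro hcon
    rw [hcon, mul_zero] at hQQ'
    exact hPD hQQ'.symm
  -- real versions
  have hQ'R : ((Q':ℝ)) ≠ 0 := by exact_mod_cast hQ'0
  have hkey : ((P':ℝ) - Real.sqrt D) * ((P':ℝ) + Real.sqrt D) = (Q:ℝ) * (Q':ℝ) := by
    have hc : ((Q:ℝ)) * (Q':ℝ) = (P':ℝ) ^ 2 - (D:ℝ) := by exact_mod_cast hQQ'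
    nlinarith [hs2, hc]
  have hPm : ((P':ℝ) - Real.sqrt D) ≠ 0 := by
    intro hcon
    have : Real.sqrt (D:ℝ) = ((P':ℤ):ℝ) := by linarith
    exact (sqrtD_irr hDn hD0) ⟨(P' : ℚ), by push_cast; rw [this]⟩
  have hPp : ((P':ℝ) + Real.sqrt D) ≠ 0 := by
    intro hcon
    have : Real.sqrt (D:ℝ) = ((-P' : ℤ):ℝ) := by push_cast; linarith
    exact (sqrtD_irr hDn hD0) ⟨((-P' : ℤ) : ℚ), by push_cast; rw [this]; push_cast; ring⟩
  -- b - wr = (P' - √D)/Q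
  have hbwr : (b:ℝ) - wr D P Q = ((P':ℝ) - Real.sqrt D) / Q := by
    rw [wr, hP', stepP, ← hb]
    push_cast
    field_simp
    ring
  have hbwc : (b:ℝ) - wc D P Q = ((P':ℝ) + Real.sqrt D) / Q := by
    rw [wc, hP', stepP, ← hb]
    push_cast
    field_simp
    ring
  -- new values
  have hwr' : wr D P' Q' = 1 / ((b:ℝ) - wr D P Q) := by
    rw [hbwr, wr, one_div_div]
    rw [div_eq_div_iff hQ'R hPm]
    linear_combination hkey
  have hwc' : wc D P' Q' = 1 / ((b:ℝ) - wc D P Q) := by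
    rw [hbwc, wc, one_div_div]
    rw [div_eq_div_iff hQ'R hPp]
    linear_combination hkey
  -- positivity facts
  have hd1 : 0 < (b:ℝ) - wr D P Q := by linarith
  have hd2 : (b:ℝ) - wr D P Q < 1 := by linarith
  have hnew_gt : 1 < wr D P' Q' := by
    rw [hwr']
    rw [lt_div_iff₀ hd1]
    linarith
  have hd3 : 1 < (b:ℝ) - wc D P Q := by
    have : (2:ℝ) ≤ (b:ℝ) := by exact_mod_cast hb2
    linarith
  have hnew_c0 : 0 < wc D P' Q' := by
    rw [hwc']; positivity
  have hnew_c1 : wc D P' Q' < 1 := by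
    rw [hwc']
    rw [div_lt_one (by linarith)]
    linarith
  -- sign of Q'
  have hQ'pos : 0 < Q' := by
    rcases lt_trichotomy Q' 0 with hneg | hzero | hpos
    · exfalso
      have hdiff : wr D P' Q' - wc D P' Q' = 2 * Real.sqrt D / Q' := by
        rw [wr, wc]; field_simp; ring
      have : 0 < wr D P' Q' - wc D P' Q' := by linarith
      rw [hdiff] at this
      have hQ'neg : ((Q':ℝ)) < 0 := by exact_mod_cast hneg
      have : 2 * Real.sqrt (D:ℝ) / (Q':ℝ) < 0 := div_neg_of_pos_of_neg (by linarith) hQ'neg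
      linarith
    · exact absurd hzero hQ'0
    · exact hpos
  exact ⟨⟨hQ'pos, Dvd.intro Q (by linarith [hQQ'] : Q' * Q = P' ^ 2 - D), hnew_gt, hnew_c0, hnew_c1⟩,
    hQQ', hb2, hwr', hwc'⟩


lemma red_bounds {D : ℤ} (hD0 : 0 < D) {P Q : ℤ} (h : Red D P Q) :
    1 ≤ P ∧ P ≤ 2 * D ∧ 1 ≤ Q ∧ Q ≤ D := by
  obtain ⟨hQ, hdvd, hw, hc0, hc1⟩ := h
  have hD1 : 1 ≤ D := hD0
  have hQR : (0:ℝ) < (Q:ℝ) := by exact_mod_cast hQ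
  have hs2 := sqrtD_sq (D := D) hD0
  have hsp := sqrtD_pos (D := D) hD0
  have hsD : Real.sqrt (D:ℝ) ≤ (D:ℝ) := by
    nlinarith [hs2, hsp, (by exact_mod_cast hD1 : (1:ℝ) ≤ (D:ℝ))]
  -- unfold the inequalities
  rw [wr, one_lt_div hQR] at hw
  have hc0' : (0:ℝ) < (P:ℝ) - Real.sqrt (D:ℝ) := by
    have := (lt_div_iff₀ hQR).mp (by rw [wc] at hc0; exact hc0)
    simpa using this
  rw [wc, div_lt_one hQR] at hc1
  -- hw : Q*1 < P + √D  (orientation?)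
  -- P > √D
  have hPs : Real.sqrt (D:ℝ) < (P:ℝ) := by linarith [hc0']
  have hP1 : 1 ≤ P := by
    have : (0:ℝ) < (P:ℝ) := lt_trans hsp hPs
    exact_mod_cast (by exact_mod_cast this : (0:ℤ) < P)
  -- r = P - Q, r² < D
  set r : ℤ := P - Q with hr
  have hrlt : ((r:ℝ)) < Real.sqrt (D:ℝ) := by push_cast [hr]; linarith
  have hrgt : -Real.sqrt (D:ℝ) < (r:ℝ) := by push_cast [hr]; linarith
  have hr2 : r ^ 2 < D := by
    have : ((r:ℝ)) ^ 2 < (D:ℝ) := by nlinarith [hrlt, hrgt, hs2]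
    exact_mod_cast this
  have hdvdr : Q ∣ D - r ^ 2 := by
    have h1 : P ^ 2 - D = Q * (Q + 2 * r) + (r ^ 2 - D) := by rw [hr]; ring
    have h2 : Q ∣ r ^ 2 - D := by
      have := hdvd
      rw [h1] at this
      exact (dvd_add_right (Dvd.intro _ rfl)).mp this
    simpa using h2.neg_right
  have hQD : Q ≤ D := le_trans (Int.le_of_dvd (by nlinarith [hr2, sq_nonneg r]) hdvdr)
    (by nlinarith [sq_nonneg r])
  have hP2 : P ≤ 2 * D := by
    have hQD' : ((Q:ℝ)) ≤ (D:ℝ) := by exact_mod_cast hQD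
    have h4 : (P:ℝ) < 2 * D := by linarith
    have h5 : P < 2 * D := by exact_mod_cast h4
    omega
  exact ⟨hP1, hP2, hQ, hQD⟩

lemma step_inj {D : ℤ} (hDn : ¬IsSquare D) (hD0 : 0 < D) {P Q R S : ℤ}
    (h1 : Red D P Q) (h2 : Red D R S)
    (hP : stepP D P Q = stepP D R S) (hQ : stepQ D P Q = stepQ D R S) :
    P = R ∧ Q = S := by
  obtain ⟨hred1, hQQ1, hb1, hwr1, hwc1⟩ := step_red hDn hD0 h1
  obtain ⟨hred2, hQQ2, hb2, hwr2, hwc2⟩ := step_red hDn hD0 h2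
  set P' := stepP D P Q with hP'd
  set Q' := stepQ D P Q with hQ'd
  -- common next state
  rw [← hP, ← hQ] at hwc2 hQQ2
  -- the ceiling characterization: both bst values = ⌈1/wc'⌉
  have hcei : ∀ (X Y : ℤ), Red D X Y → wc D P' Q' = 1 / ((bst D X Y : ℝ) - wc D X Y) →
      bst D X Y = ⌈(wc D P' Q')⁻¹⌉ := by
    intro X Y hred hwc
    have hc0 := hred.c_pos
    have hc1 := hred.c_lt
    have hwgt := hred.w_gt
    have hb2' : 2 ≤ bst D X Y := by
      have hle : wr D X Y ≤ ((bst D X Y : ℤ) : ℝ) := Int.le_ceil _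
      have h1 : (1:ℝ) < ((bst D X Y : ℤ) : ℝ) := lt_of_lt_of_le hwgt hle
      have : (1:ℤ) < bst D X Y := by exact_mod_cast h1
      omega
    have hbig : (1:ℝ) < (bst D X Y : ℝ) - wc D X Y := by
      have : (2:ℝ) ≤ (bst D X Y : ℝ) := by exact_mod_cast hb2'
      linarith
    have hpos : (0:ℝ) < (bst D X Y : ℝ) - wc D X Y := by linarith
    have hinv : (wc D P' Q')⁻¹ = (bst D X Y : ℝ) - wc D X Y := by
      rw [hwc]; simp [one_div]
    symm
    rw [Int.ceil_eq_iff]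
    constructor
    · rw [hinv]; push_cast; linarith
    · rw [hinv]; linarith
  have e1 := hcei P Q h1 hwc1
  have e2 := hcei R S h2 hwc2
  have hbeq : bst D P Q = bst D R S := by rw [e1, e2]
  -- recover Q
  have hQ'ne : Q' ≠ 0 := ne_of_gt hred1.qpos
  have hQeq : Q = S := by
    have : Q * Q' = S * Q' := by rw [hQQ1, hQQ2]
    exact mul_right_cancel₀ hQ'ne this
  -- recover P
  have hPeq : P = R := by
    have e3 : bst D P Q * Q - P = bst D R S * S - R := hP
    rw [hbeq, hQeq] at e3
    omega
  exact ⟨hPeq, hQeq⟩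


noncomputable def seqPQ (D P₀ Q₀ : ℤ) : ℕ → ℤ × ℤ
  | 0 => (P₀, Q₀)
  | k + 1 => (stepP D (seqPQ D P₀ Q₀ k).1 (seqPQ D P₀ Q₀ k).2,
              stepQ D (seqPQ D P₀ Q₀ k).1 (seqPQ D P₀ Q₀ k).2)

theorem forward {D P₀ Q₀ : ℤ} (hDn : ¬IsSquare D) (hD0 : 0 < D) (h0 : Red D P₀ Q₀) :
    ∃ (b : ℕ → ℤ) (m : ℕ), 0 < m ∧ (∀ i, 2 ≤ b i) ∧
      Tendsto (mcfConv b) atTop (nhds (wr D P₀ Q₀)) ∧ ∀ k, b (k + m) = b k := by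
  classical
  set S := seqPQ D P₀ Q₀ with hS
  have hSsucc : ∀ k, S (k + 1) = (stepP D (S k).1 (S k).2, stepQ D (S k).1 (S k).2) := by
    intro k; rw [hS]; rfl
  have hred : ∀ k, Red D (S k).1 (S k).2 := by
    intro k
    induction k with
    | zero => exact h0
    | succ k ih =>
      rw [hSsucc k]
      exact (step_red hDn hD0 ih).1
  set w : ℕ → ℝ := fun k => wr D (S k).1 (S k).2 with hw
  set b : ℕ → ℤ := fun k => bst D (S k).1 (S k).2 with hbdef
  have hw1 : ∀ k, 1 < w k := fun k => (hred k).w_gt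
  have hb2 : ∀ k, 2 ≤ b k := fun k => (step_red hDn hD0 (hred k)).2.2.1
  have hstep : ∀ k, w (k + 1) = 1 / ((b k : ℝ) - w k) := by
    intro k
    have := (step_red hDn hD0 (hred k)).2.2.2.1
    rw [hw, hbdef]
    simp only [hSsucc k]
    exact this
  have hbw : ∀ k, (b k : ℝ) - 1 < w k ∧ w k < (b k : ℝ) := by
    intro k
    have hirr := wr_irr hDn hD0 (P := (S k).1) (ne_of_gt (hred k).qpos)
    constructor
    · have := Int.ceil_lt_add_one (w k)
      have hc : ((b k : ℤ) : ℝ) = (⌈w k⌉ : ℝ) := by rw [hbdef]; rfl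
      linarith [hc ▸ this]
    · exact lt_of_le_of_ne (by rw [hbdef]; exact Int.le_ceil _) (hirr.ne_int (b k))
  -- pigeonhole
  set T : Finset (ℤ × ℤ) := Finset.Icc (1, 1) (2 * D, D) with hT
  have hmaps : ∀ k, S k ∈ T := by
    intro k
    obtain ⟨h1, h2, h3, h4⟩ := red_bounds hD0 (hred k)
    rw [hT, Finset.mem_Icc]
    constructor
    · exact Prod.mk_le_mk.mpr ⟨h1, h3⟩
    · exact Prod.mk_le_mk.mpr ⟨h2, h4⟩
  obtain ⟨i, -, j, -, hne, hSij⟩ :=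
    Finset.exists_ne_map_eq_of_card_lt_of_maps_to
      (s := Finset.range (T.card + 1)) (t := T)
      (by simp) (fun k _ => hmaps k)
  wlog hij : i < j generalizing i j
  · exact this j i hne.symm hSij.symm (by omega)
  have hback : ∀ t, t ≤ i → S (i - t) = S (j - t) := by
    intro t
    induction t with
    | zero => intro _; simpa using hSij
    | succ t ih =>
      intro ht
      have h1 := ih (Nat.le_of_succ_le ht)
      have e1 : i - t = (i - (t + 1)) + 1 := by omega
      have e2 : j - t = (j - (t + 1)) + 1 := by omega
      rw [e1, e2, hSsucc, hSsucc] at h1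
      have hPe := congrArg Prod.fst h1
      have hQe := congrArg Prod.snd h1
      simp only at hPe hQe
      obtain ⟨hp, hq⟩ := step_inj hDn hD0 (hred (i - (t+1))) (hred (j - (t+1))) hPe hQe
      exact Prod.ext hp hq
  set m := j - i with hmdef
  have hm : 0 < m := by omega
  have h0m : S 0 = S m := by
    have := hback i le_rfl
    simpa [hmdef] using this
  have hSper : ∀ k, S (k + m) = S k := by
    intro k
    induction k with
    | zero => simpa using h0m.symm
    | succ k ih =>
      have e : k + 1 + m = (k + m) + 1 := by omega
      rw [e, hSsucc, hSsucc, ih]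
  have hbper : ∀ k, b (k + m) = b k := by
    intro k; rw [hbdef]; simp only [hSper k]
  have hwper : ∀ k, w (k + m) = w k := by
    intro k; rw [hw]; simp only [hSper k]
  -- w k = w (k % m)
  have hwmod : ∀ k, w k = w (k % m) := by
    intro k
    induction k using Nat.strong_induction_on with
    | _ k ih =>
      by_cases hk : k < m
      · rw [Nat.mod_eq_of_lt hk]
      · push_neg at hk
        have e : k = (k - m) + m := by omega
        have h1 : w ((k - m) + m) = w (k - m) := hwper (k - m)
        have h2 : w k = w (k - m) := by conv_lhs => rw [e, h1]
        rw [h2, ih (k - m) (by omega)]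
        congr 1
        exact (Nat.mod_eq_sub_mod hk).symm
  -- rho
  have hmne : (Finset.range m).Nonempty := Finset.nonempty_range_iff.mpr (by omega)
  set ρ : ℝ := (Finset.range m).inf' hmne w with hρ
  have hρ1 : 1 < ρ := by
    rw [hρ, Finset.lt_inf'_iff]
    intro j _
    exact hw1 j
  have hρw : ∀ k, ρ ≤ w k := by
    intro k
    rw [hwmod k]
    exact Finset.inf'_le _ (Finset.mem_range.mpr (Nat.mod_lt _ hm))
  have hρ0 : 0 < ρ := by linarith
  -- approximation lemma
  have happrox : ∀ k, ∀ t : ℝ, 1 < t →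
      |w 0 - F ((List.range k).map b) t| ≤
        |w k - t| * ∏ j ∈ Finset.range k, (w (j + 1))⁻¹ := by
    intro k
    induction k with
    | zero => intro t ht; simp
    | succ k ih =>
      intro t ht
      have hbk : (2 : ℝ) ≤ (b k : ℝ) := by exact_mod_cast hb2 k
      have ht0 : (0:ℝ) < t := by linarith
      have hinv : 1 / t < 1 := by rw [div_lt_one ht0]; exact ht
      have hinv0 : 0 < 1 / t := by positivity
      set t' : ℝ := (b k : ℝ) - 1 / t with ht'
      have ht'1 : 1 < t' := by rw [ht']; linarith
      have hlist : (List.range (k+1)).map b = (List.range k).map b ++ [b k] := by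
        rw [List.range_succ, List.map_append]; rfl
      have hF : F ((List.range (k+1)).map b) t = F ((List.range k).map b) t' := by
        rw [hlist, F_append]
        congr 1
      rw [hF]
      have hmain := ih t' ht'1
      -- |w k - t'| ≤ |w (k+1) - t| * (w (k+1))⁻¹
      have hwk1 : 1 < w (k + 1) := hw1 (k + 1)
      have hbwk := hbw k
      have hbmw : 0 < (b k : ℝ) - w k := by linarith [hbwk.2]
      have hne1 : w (k + 1) ≠ 0 := by linarith
      have hinvw : 1 / w (k + 1) = (b k : ℝ) - w k := by
        rw [hstep k, one_div_one_div]
      have hdiff : w k - t' = (w (k + 1) - t) / (t * w (k + 1)) := by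
        have hwk : w k = (b k : ℝ) - 1 / w (k + 1) := by
          rw [hinvw]; ring
        rw [hwk, ht']
        field_simp
        ring
      have habs : |w k - t'| = |w (k + 1) - t| / (t * w (k + 1)) := by
        rw [hdiff, abs_div, abs_of_pos (by positivity : (0:ℝ) < t * w (k+1))]
      have hle : |w k - t'| ≤ |w (k + 1) - t| * (w (k + 1))⁻¹ := by
        rw [habs, div_eq_mul_inv, mul_inv]
        have h1 : t⁻¹ ≤ 1 := by
          rw [inv_le_one_iff₀]; right; linarith
        have h2 : (0:ℝ) ≤ (w (k+1))⁻¹ := by positivity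
        have h3 : t⁻¹ * (w (k+1))⁻¹ ≤ (w (k+1))⁻¹ := by nlinarith
        exact mul_le_mul_of_nonneg_left h3 (abs_nonneg _)
      calc |w 0 - F ((List.range k).map b) t'|
          ≤ |w k - t'| * ∏ j ∈ Finset.range k, (w (j + 1))⁻¹ := hmain
        _ ≤ (|w (k + 1) - t| * (w (k + 1))⁻¹) * ∏ j ∈ Finset.range k, (w (j + 1))⁻¹ := by
            apply mul_le_mul_of_nonneg_right hle
            apply Finset.prod_nonneg
            intro j _
            have := hw1 (j + 1)
            positivity
        _ = |w (k + 1) - t| * ∏ j ∈ Finset.range (k+1), (w (j + 1))⁻¹ := by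
            rw [Finset.prod_range_succ]; ring
  -- mcfConv representation
  have hconv : ∀ k, mcfConv b k = F ((List.range k).map b) ((b k : ℝ)) := by
    intro k
    rw [mcfConv, mcfList_eq_F]
    have hlist : (List.range (k+1)).map b = (List.range k).map b ++ [b k] := by
      rw [List.range_succ, List.map_append]; rfl
    rw [hlist, F_append]
    congr 1
    simp [F]
  -- final bound
  have hbound : ∀ k, |w 0 - mcfConv b k| ≤ (ρ⁻¹) ^ k := by
    intro k
    have hbk : (1 : ℝ) < (b k : ℝ) := by
      have : (2 : ℝ) ≤ (b k : ℝ) := by exact_mod_cast hb2 k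
      linarith
    have h1 := happrox k (b k) hbk
    rw [← hconv k] at h1
    have h2 : |w k - (b k : ℝ)| ≤ 1 := by
      have := hbw k
      rw [abs_le]
      constructor <;> linarith [this.1, this.2]
    have h3 : ∏ j ∈ Finset.range k, (w (j + 1))⁻¹ ≤ (ρ⁻¹) ^ k := by
      have := Finset.prod_le_prod (s := Finset.range k)
        (f := fun j => (w (j + 1))⁻¹) (g := fun _ => ρ⁻¹)
        (fun j _ => by have := hw1 (j+1); positivity)
        (fun j _ => by
          apply inv_anti₀ hρ0 (hρw (j + 1)))
      simpa using this
    have h4 : (0:ℝ) ≤ ∏ j ∈ Finset.range k, (w (j + 1))⁻¹ :=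
      Finset.prod_nonneg fun j _ => by have := hw1 (j+1); positivity
    calc |w 0 - mcfConv b k| ≤ |w k - (b k : ℝ)| * ∏ j ∈ Finset.range k, (w (j + 1))⁻¹ := h1
      _ ≤ 1 * ((ρ⁻¹) ^ k) := by
          apply mul_le_mul h2 h3 h4 zero_le_one
      _ = (ρ⁻¹) ^ k := one_mul _
  have htends : Tendsto (mcfConv b) atTop (nhds (w 0)) := by
    have hz : Tendsto (fun k : ℕ => (ρ⁻¹) ^ k) atTop (nhds 0) := by
      apply tendsto_pow_atTop_nhds_zero_of_lt_one (by positivity)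
      rw [inv_lt_one_iff₀]; right; exact hρ1
    have hsq := squeeze_zero (f := fun k => |mcfConv b k - w 0|) (g := fun k => (ρ⁻¹) ^ k)
      (fun k => abs_nonneg _) (fun k => by show |mcfConv b k - w 0| ≤ (ρ⁻¹) ^ k; rw [abs_sub_comm]; exact hbound k) hz
    rw [tendsto_iff_dist_tendsto_zero]
    simpa [Real.dist_eq] using hsq
  exact ⟨b, m, hm, fun i => hb2 i, htends, hbper⟩

lemma mcfConv_eq_F (b : ℕ → ℤ) (k : ℕ) :
    mcfConv b k = F ((List.range k).map b) ((b k : ℝ)) := by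
  rw [mcfConv, mcfList_eq_F]
  have hlist : (List.range (k+1)).map b = (List.range k).map b ++ [b k] := by
    rw [List.range_succ, List.map_append]; rfl
  rw [hlist, F_append]
  congr 1
  simp [F]

end MCF

open MCF in
/-- A real quadratic irrational `ϖ = x + y√d` with Galois conjugate
    `ϖ' = x − y√d` satisfies `ϖ > 1 > ϖ' > 0` if and only if its minus
    continued fraction expansion is purely periodic. -/
theorem minus_cf_purely_periodic_iff (d : ℕ) (hd : ¬ IsSquare (d : ℤ))
    (x y : ℚ) (hy : y ≠ 0) (ϖ ϖ' : ℝ)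
    (hϖ : ϖ = (x : ℝ) + (y : ℝ) * Real.sqrt d)
    (hϖ' : ϖ' = (x : ℝ) - (y : ℝ) * Real.sqrt d) :
    (ϖ > 1 ∧ 1 > ϖ' ∧ ϖ' > 0) ↔
      ∃ (b : ℕ → ℤ) (m : ℕ), 0 < m ∧ (∀ i, 1 ≤ i → 2 ≤ b i) ∧
        Filter.Tendsto (mcfConv b) Filter.atTop (nhds ϖ) ∧
        ∀ k, b (k + m) = b k := by
  have hd0 : 0 < d := by
    rcases Nat.eq_zero_or_pos d with h | h
    · exfalso; apply hd; rw [h]; exact ⟨0, rfl⟩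
    · exact h
  have hdR : (1:ℝ) ≤ (d:ℝ) := by exact_mod_cast hd0
  have hs2 : Real.sqrt (d:ℝ) ^ 2 = (d:ℝ) := Real.sq_sqrt (by linarith)
  have hsd : 0 < Real.sqrt (d:ℝ) := Real.sqrt_pos.2 (by linarith)
  have hirrd : Irrational (Real.sqrt (d:ℝ)) := by
    have h1 : Irrational (Real.sqrt (((d:ℤ)):ℝ)) :=
      (irrational_sqrt_intCast_iff_of_nonneg (by exact_mod_cast hd0.le)).2 hd
    simpa using h1
  have hyR : ((y:ℝ)) ≠ 0 := by exact_mod_cast hy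
  have hϖirr : Irrational ϖ := by
    rw [hϖ]; exact ((hirrd.ratCast_mul hy).ratCast_add x)
  have hϖ'irr : Irrational ϖ' := by
    rw [hϖ']
    have h3 := ((hirrd.ratCast_mul hy).neg.ratCast_add x)
    simpa [sub_eq_add_neg] using h3
  constructor
  · rintro ⟨h1, h2, h3⟩
    have hyy : (0:ℝ) < (y:ℝ) := by
      by_contra hcon
      push_neg at hcon
      have : (y:ℝ) * Real.sqrt d ≤ 0 := mul_nonpos_of_nonpos_of_nonneg hcon hsd.le
      rw [hϖ] at h1; rw [hϖ'] at h2
      linarith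
    set a : ℤ := x.num * (y.den : ℤ) with ha
    set e : ℤ := y.num * (x.den : ℤ) with he
    set c : ℤ := ((x.den : ℤ)) * ((y.den : ℤ)) with hc
    have hxdp : (0:ℤ) < (x.den : ℤ) := by exact_mod_cast x.pos
    have hydp : (0:ℤ) < (y.den : ℤ) := by exact_mod_cast y.pos
    have hc0 : (0:ℤ) < c := by rw [hc]; positivity
    have hcR : ((c:ℝ)) ≠ 0 := by
      have : (0:ℝ) < (c:ℝ) := by exact_mod_cast hc0
      linarith
    have he0 : (0:ℤ) < e := by
      rw [he]
      have hnum : 0 < y.num := Rat.num_pos.mpr (by exact_mod_cast hyy)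
      positivity
    have hxr : (x:ℝ) = (a:ℝ) / (c:ℝ) := by
      rw [Rat.cast_def, ha, hc]
      push_cast
      rw [mul_div_mul_right _ _ (by exact_mod_cast ne_of_gt hydp : ((y.den:ℝ)) ≠ 0)]
    have hyr : (y:ℝ) = (e:ℝ) / (c:ℝ) := by
      rw [Rat.cast_def, he, hc]
      push_cast
      rw [mul_comm ((y.num:ℝ)) ((x.den:ℝ)), mul_div_mul_left _ _
        (by exact_mod_cast ne_of_gt hxdp : ((x.den:ℝ)) ≠ 0)]
    set D : ℤ := (e * c) ^ 2 * (d : ℤ) with hD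
    have hD0 : 0 < D := by
      rw [hD]
      have : (0:ℤ) < (d:ℤ) := by exact_mod_cast hd0
      positivity
    have hDn : ¬IsSquare D := by
      rintro ⟨r, hr⟩
      apply hd
      have hec : e * c ≠ 0 := by positivity
      have hr' : (e * c) ^ 2 * (d:ℤ) = r * r := hD.symm.trans hr
      have hdvd : (e * c) ^ 2 ∣ r ^ 2 := ⟨(d:ℤ), by rw [sq r, ← hr']⟩
      obtain ⟨s, hs⟩ := (Int.pow_dvd_pow_iff (two_ne_zero)).mp hdvd
      refine ⟨s, ?_⟩
      have h4 : (e * c) ^ 2 * (d:ℤ) = (e * c) ^ 2 * (s * s) := by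
        rw [hr', hs]; ring
      exact mul_left_cancel₀ (pow_ne_zero 2 hec) h4
    have hsD : Real.sqrt (D:ℝ) = ((e:ℝ) * (c:ℝ)) * Real.sqrt (d:ℝ) := by
      have hcast : ((D:ℤ):ℝ) = (((e:ℝ) * (c:ℝ)) ^ 2) * (d:ℝ) := by
        rw [hD]; push_cast; ring
      rw [hcast, Real.sqrt_mul (sq_nonneg _), Real.sqrt_sq (by positivity)]
    set P₀ : ℤ := a * c with hP₀
    set Q₀ : ℤ := c ^ 2 with hQ₀
    have hwr0 : wr D P₀ Q₀ = ϖ := by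
      rw [wr, hsD, hϖ, hxr, hyr, hP₀, hQ₀]
      push_cast
      field_simp
    have hwc0 : wc D P₀ Q₀ = ϖ' := by
      rw [wc, hsD, hϖ', hxr, hyr, hP₀, hQ₀]
      push_cast
      field_simp
    have hred0 : Red D P₀ Q₀ := by
      refine ⟨by positivity, ⟨a ^ 2 - e ^ 2 * (d:ℤ), by rw [hP₀, hQ₀, hD]; ring⟩, ?_, ?_, ?_⟩
      · rw [hwr0]; exact h1
      · rw [hwc0]; exact h3
      · rw [hwc0]; exact h2
    obtain ⟨b, m, hm, hb2, htends, hbper⟩ := forward hDn hD0 hred0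
    rw [hwr0] at htends
    exact ⟨b, m, hm, fun i _ => hb2 i, htends, hbper⟩
  · rintro ⟨b, m, hm, hb, htend, hper⟩
    have hb' : ∀ i, 2 ≤ b i := by
      intro i
      rcases Nat.eq_zero_or_pos i with rfl | hi
      · have h0 := hper 0
        rw [Nat.zero_add] at h0
        rw [← h0]
        exact hb m hm
      · exact hb i hi
    have hentries : ∀ (k : ℕ), ∀ z ∈ (List.range k).map b, 2 ≤ z := by
      intro k z hz
      obtain ⟨i, _, rfl⟩ := List.mem_map.mp hz
      exact hb' i
    have hgt1 : ∀ k, 1 < mcfConv b k := by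
      intro k
      rw [mcfConv_eq_F]
      exact F_gt_one (hentries k) (by exact_mod_cast (by have := hb' k; omega : (1:ℤ) < b k))
    have hϖ1 : 1 ≤ ϖ := ge_of_tendsto' htend (fun k => (hgt1 k).le)
    have hϖgt : 1 < ϖ := by
      rcases lt_or_eq_of_le hϖ1 with h | h
      · exact h
      · exact absurd h.symm (by simpa using hϖirr.ne_int 1)
    set per : List ℤ := (List.range m).map b with hperdef
    have hperne : per ≠ [] := by
      simp only [hperdef, ne_eq, List.map_eq_nil_iff, List.range_eq_nil]
      omega
    have hperent : ∀ z ∈ per, 2 ≤ z := hentries m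
    have hkey : ∀ k, mcfConv b (k + m) = F per (mcfConv b k) := by
      intro k
      have he1 : k + m + 1 = m + (k + 1) := by omega
      rw [mcfConv, he1, List.range_add, List.map_append, List.map_map]
      have he2 : (List.range (k+1)).map (b ∘ (m + ·)) = (List.range (k+1)).map b := by
        apply List.map_congr_left
        intro i _
        show b (m + i) = b i
        rw [add_comm]
        exact hper i
      rw [he2, mcfList_eq_F, F_append, ← mcfList_eq_F, ← mcfConv]
    have hl1 : Tendsto (fun k => mcfConv b (k + m)) atTop (nhds ϖ) :=
      htend.comp (tendsto_add_atTop_nat m)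
    have hl2 : Tendsto (fun k => F per (mcfConv b k)) atTop (nhds (F per ϖ)) := by
      have hd0' : Tendsto (fun k => dist (mcfConv b k) ϖ) atTop (nhds 0) :=
        tendsto_iff_dist_tendsto_zero.mp htend
      rw [tendsto_iff_dist_tendsto_zero]
      apply squeeze_zero (fun k => dist_nonneg)
        (g := fun k => dist (mcfConv b k) ϖ) ?_ hd0'
      intro k
      show dist (F per (mcfConv b k)) (F per ϖ) ≤ dist (mcfConv b k) ϖ
      rw [Real.dist_eq, Real.dist_eq]
      exact F_lipschitz hperent (hgt1 k) hϖgt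
    have hfix : ϖ = F per ϖ := by
      apply tendsto_nhds_unique ?_ hl2
      have : (fun k => mcfConv b (k + m)) = fun k => F per (mcfConv b k) := funext hkey
      rw [← this]
      exact hl1
    rcases hM : mat per with ⟨A, B, C, Dh⟩
    obtain ⟨i1, i2, i3, i4, i5, i6⟩ := mat_inv hperne hperent hM
    obtain ⟨e1, e2, e3⟩ := F_mat hperne hperent hϖgt hM
    have hq : ϖ * ((C:ℝ) * ϖ - (Dh:ℝ)) = (A:ℝ) * ϖ - (B:ℝ) := by
      have h5 := hfix
      rw [e1] at h5
      rw [eq_div_iff (ne_of_gt e2)] at h5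
      linarith [h5]
    set uq : ℚ := (C:ℚ) * (x^2 + y^2 * (d:ℚ)) - (Dh:ℚ) * x - (A:ℚ) * x + (B:ℚ) with huq
    set vq : ℚ := 2 * (C:ℚ) * x * y - (Dh:ℚ) * y - (A:ℚ) * y with hvq
    have huv : (uq:ℝ) + (vq:ℝ) * Real.sqrt (d:ℝ) = 0 := by
      rw [huq, hvq]
      push_cast
      rw [hϖ] at hq
      linear_combination hq - (C:ℝ) * (y:ℝ)^2 * hs2
    have hv0 : vq = 0 := by
      by_contra hvne
      apply hirrd
      refine ⟨-uq / vq, ?_⟩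
      have hvR : ((vq:ℝ)) ≠ 0 := by exact_mod_cast hvne
      show ((-uq / vq : ℚ) : ℝ) = Real.sqrt (d:ℝ)
      push_cast
      rw [div_eq_iff hvR]
      linarith [huv]
    have hu0 : (uq:ℝ) = 0 := by
      rw [hv0] at huv
      push_cast at huv
      linarith [huv]
    have hq' : ϖ' * ((C:ℝ) * ϖ' - (Dh:ℝ)) = (A:ℝ) * ϖ' - (B:ℝ) := by
      rw [hϖ']
      have huR : (uq:ℝ) = 0 := hu0
      rw [huq] at huR
      have hvR : ((vq:ℝ)) = 0 := by exact_mod_cast hv0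
      rw [hvq] at hvR
      push_cast at huR hvR
      linear_combination huR - Real.sqrt (d:ℝ) * hvR + (C:ℝ) * (y:ℝ)^2 * hs2
    have hne : ϖ ≠ ϖ' := by
      rw [hϖ, hϖ']
      intro hcon
      have : (y:ℝ) * Real.sqrt (d:ℝ) = 0 := by linarith
      rcases mul_eq_zero.mp this with h | h
      · exact hyR h
      · linarith
    have hsum : (C:ℝ) * (ϖ + ϖ') = (A:ℝ) + (Dh:ℝ) := by
      have hfact : (ϖ - ϖ') * ((C:ℝ) * (ϖ + ϖ') - ((A:ℝ) + (Dh:ℝ))) = 0 := by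
        linear_combination hq - hq'
      rcases mul_eq_zero.mp hfact with h | h
      · exact absurd (by linarith : ϖ = ϖ') hne
      · linarith
    have hprod : (C:ℝ) * (ϖ * ϖ') = (B:ℝ) := by
      linear_combination ϖ * hsum - hq
    have hC1 : (1:ℝ) ≤ (C:ℝ) := by exact_mod_cast (by omega : (1:ℤ) ≤ C)
    have hB1 : (1:ℝ) ≤ (B:ℝ) := by exact_mod_cast i3
    have hCB : (C:ℝ) + (B:ℝ) ≤ (A:ℝ) + (Dh:ℝ) := by
      have : C + B ≤ A + Dh := by omega
      exact_mod_cast this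
    have hϖ'pos : 0 < ϖ' := by
      have hCϖ : 0 < (C:ℝ) * ϖ := by nlinarith
      have heq : ϖ' = (B:ℝ) / ((C:ℝ) * ϖ) := by
        rw [eq_div_iff (ne_of_gt hCϖ)]
        linear_combination hprod
      rw [heq]
      exact div_pos (by linarith) hCϖ
    have hϖ'le : ϖ' ≤ 1 := by
      by_contra hcon
      push_neg at hcon
      have hx1 : 0 < (ϖ - 1) * (ϖ' - 1) := mul_pos (by linarith) (by linarith)
      have hfac : (C:ℝ) * ((ϖ - 1) * (ϖ' - 1)) = (B:ℝ) + (C:ℝ) - ((A:ℝ) + (Dh:ℝ)) := by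
        linear_combination hprod - hsum
      nlinarith [hx1, hC1, hCB, hfac]
    have hϖ'lt : ϖ' < 1 := by
      rcases lt_or_eq_of_le hϖ'le with h | h
      · exact h
      · exact absurd (by simpa using h : ϖ' = ((1:ℤ):ℝ)) (hϖ'irr.ne_int 1)
    exact ⟨hϖgt, hϖ'lt, hϖ'pos⟩
end

section
/- Let p be an odd prime, n ≥ 1, ψ a Dirichlet character mod p^{n+1} of order p^n, and a an integer with p ∣ a but p^{n+1} ∤ a. Then the twisted Dedekind sum D_ψ(a,a) = ∑_{t=1}^{p^{n+1}} ψ(t)({at/p^{n+1}} − 1/2)² equals 0. -/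
/-- Let `p` be an odd prime, `n ≥ 1`, `ψ` a Dirichlet character mod `p^(n+1)`
    of order `p^n`, and `a` an integer with `p ∣ a` but `p^(n+1) ∤ a`.  Then
    the twisted Dedekind sum `∑_{t=1}^{p^{n+1}} ψ(t)({at/p^{n+1}} − 1/2)²`
    vanishes. -/
theorem twisted_dedekind_sum_vanishes (p n : ℕ) (hp : p.Prime) (hodd : Odd p)
    (hn : 1 ≤ n) (ψ : DirichletCharacter ℂ (p ^ (n + 1)))
    (hord : orderOf ψ = p ^ n) (a : ℤ)
    (hpa : (p : ℤ) ∣ a) (hpna : ¬ ((p : ℤ) ^ (n + 1) ∣ a)) :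
    ∑ t ∈ Finset.Icc 1 (p ^ (n + 1)),
      ψ (t : ZMod (p ^ (n + 1))) *
        Complex.ofReal (Int.fract ((a : ℝ) * t / (p ^ (n + 1))) - 1 / 2) ^ 2 = 0 := by
  have hp1 : 1 < p := hp.one_lt
  set M := p ^ n with hMdef
  have hMN : p ^ (n + 1) = M * p := by rw [hMdef, pow_succ]
  have hMdvdN : M ∣ p ^ (n + 1) := ⟨p, hMN⟩
  have hNpos : 0 < p ^ (n + 1) := pow_pos hp.pos _
  have hM1 : 1 < M := Nat.one_lt_pow (by omega) hp1
  haveI : NeZero (p ^ (n + 1)) := ⟨hNpos.ne'⟩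
  obtain ⟨b, hb⟩ := hpa
  -- the fractional part only depends on the argument mod M
  have fract_eq : ∀ v w : ℕ, ((M : ℤ) ∣ (v : ℤ) - w) →
      Int.fract ((a : ℝ) * v / (p ^ (n + 1) : ℕ)) =
        Int.fract ((a : ℝ) * w / (p ^ (n + 1) : ℕ)) := by
    rintro v w ⟨k, hk⟩
    rw [Int.fract_eq_fract]
    refine ⟨b * k, ?_⟩
    have hN0 : ((p ^ (n + 1) : ℕ) : ℝ) ≠ 0 := by positivity
    have h1 : ((v : ℝ) - w) = (M : ℝ) * k := by exact_mod_cast hk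
    have h2 : (a : ℝ) = (p : ℝ) * b := by exact_mod_cast hb
    have h3 : ((p ^ (n + 1) : ℕ) : ℝ) = (M : ℝ) * p := by exact_mod_cast hMN
    rw [div_sub_div_same, div_eq_iff hN0]
    push_cast
    push_cast at h3
    calc (a : ℝ) * v - (a : ℝ) * w = (a : ℝ) * ((v : ℝ) - w) := by ring
      _ = ((p : ℝ) * b) * ((M : ℝ) * k) := by rw [h1, h2]
      _ = (b : ℝ) * k * ((M : ℝ) * p) := by ring
      _ = (b : ℝ) * k * ((p : ℝ) ^ (n + 1)) := by rw [← h3]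
  set F : ZMod (p ^ (n + 1)) → ℂ := fun x =>
    ψ x * Complex.ofReal (Int.fract ((a : ℝ) * x.val / (p ^ (n + 1) : ℕ)) - 1 / 2) ^ 2 with hF
  -- there is u ≡ 1 mod M with ψ u ≠ 1
  have hD : ∃ c : ℕ, ψ (((1 + c * M : ℕ) : ZMod (p ^ (n + 1)))) ≠ 1 := by
    by_contra hcon
    push_neg at hcon
    have hpow : ψ ^ M.totient = 1 := by
      apply MulChar.ext
      intro x
      rw [MulChar.pow_apply_coe, MulChar.one_apply_coe, ← map_pow]
      set z : ZMod (p ^ (n + 1)) := (x : ZMod (p ^ (n + 1))) ^ M.totient with hz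
      have hz1 : (ZMod.castHom hMdvdN (ZMod M)) z = 1 := by
        rw [hz, map_pow]
        have : (ZMod.castHom hMdvdN (ZMod M)) (x : ZMod (p ^ (n + 1))) =
            ((ZMod.unitsMap hMdvdN x : (ZMod M)ˣ) : ZMod M) := rfl
        rw [this, ← Units.val_pow_eq_pow_val, ZMod.pow_totient, Units.val_one]
      have hzval : z.val ≡ 1 [MOD M] := by
        rw [← ZMod.natCast_eq_natCast_iff]
        have : ((z.val : ℕ) : ZMod M) = (ZMod.castHom hMdvdN (ZMod M)) z := by
          rw [ZMod.castHom_apply, ZMod.natCast_val]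
        rw [this, hz1, Nat.cast_one]
      have hmod : z.val % M = 1 := by
        have h6 := hzval
        unfold Nat.ModEq at h6
        rwa [Nat.one_mod_eq_one.mpr (by omega)] at h6
      have hzeq : z = ((1 + (z.val / M) * M : ℕ) : ZMod (p ^ (n + 1))) := by
        conv_lhs => rw [← ZMod.natCast_rightInverse z]
        congr 1
        calc z.val = M * (z.val / M) + z.val % M := (Nat.div_add_mod _ _).symm
          _ = 1 + (z.val / M) * M := by rw [hmod]; ring
      rw [hzeq, hcon]
    have hdvd := orderOf_dvd_of_pow_eq_one hpow
    rw [hord] at hdvd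
    rw [hMdef, Nat.totient_prime_pow hp (by omega)] at hdvd
    have hcop : Nat.Coprime (p ^ n) (p - 1) := by
      apply Nat.Coprime.pow_left
      rw [hp.coprime_iff_not_dvd]
      intro hdd
      have := Nat.le_of_dvd (by omega) hdd
      omega
    have h7 := hcop.dvd_of_dvd_mul_right hdvd
    have h8 := (Nat.pow_dvd_pow_iff_le_right hp1).mp h7
    omega
  obtain ⟨c, hu⟩ := hD
  set u : ZMod (p ^ (n + 1)) := ((1 + c * M : ℕ) : ZMod (p ^ (n + 1))) with hudef
  have hUnit : IsUnit u := by
    rw [hudef, ZMod.isUnit_iff_coprime]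
    apply Nat.Coprime.pow_right
    rw [Nat.coprime_comm, hp.coprime_iff_not_dvd]
    intro hdd
    have hpM : p ∣ c * M := Dvd.dvd.mul_left (dvd_pow_self p (by omega)) c
    have h12 : p ∣ 1 := (Nat.dvd_add_right hpM).mp (by rwa [add_comm] at hdd)
    have := Nat.le_of_dvd one_pos h12
    omega
  obtain ⟨v, hv⟩ := hUnit
  have hBij : Function.Bijective (fun x : ZMod (p ^ (n + 1)) => u * x) := by
    rw [Function.bijective_iff_has_inverse]
    refine ⟨fun x => (↑v⁻¹ : ZMod (p ^ (n + 1))) * x, fun x => ?_, fun x => ?_⟩ <;>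
      simp [← hv, ← mul_assoc]
  -- key step: F (u * x) = ψ u * F x
  have hC : ∀ x : ZMod (p ^ (n + 1)), F (u * x) = ψ u * F x := by
    intro x
    have hxv : ((x.val : ℕ) : ZMod (p ^ (n + 1))) = x := ZMod.natCast_rightInverse x
    have hux : u * x = (((1 + c * M) * x.val : ℕ) : ZMod (p ^ (n + 1))) := by
      rw [Nat.cast_mul, hxv, hudef]
    obtain ⟨q, r, hqr, hrr⟩ : ∃ q r, ((1 + c * M) * x.val) / (p ^ (n + 1)) = q ∧
        ((1 + c * M) * x.val) % (p ^ (n + 1)) = r := ⟨_, _, rfl, rfl⟩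
    have hval : (u * x).val = r := by rw [hux, ZMod.val_natCast, hrr]
    have hdvdMv : (M : ℤ) ∣ ((u * x).val : ℤ) - (x.val : ℤ) := by
      rw [hval]
      refine ⟨(c : ℤ) * x.val - (p : ℤ) * q, ?_⟩
      have h1 : ((p ^ (n + 1) : ℕ) : ℤ) * (q : ℤ) + (r : ℤ) =
          (((1 + c * M) * x.val : ℕ) : ℤ) := by
        rw [← hqr, ← hrr]; exact_mod_cast Nat.div_add_mod ((1 + c * M) * x.val) (p ^ (n + 1))
      have h2 : (((1 + c * M) * x.val : ℕ) : ℤ) = (1 + (c : ℤ) * M) * (x.val : ℤ) := by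
        push_cast; ring
      have h3 : ((p ^ (n + 1) : ℕ) : ℤ) = (M : ℤ) * p := by exact_mod_cast hMN
      linear_combination h1 + h2 - (q : ℤ) * h3
    rw [hF]
    simp only
    rw [map_mul, fract_eq _ _ hdvdMv]
    ring
  have hS : ∑ x : ZMod (p ^ (n + 1)), F x = ψ u * ∑ x : ZMod (p ^ (n + 1)), F x := by
    calc ∑ x : ZMod (p ^ (n + 1)), F x = ∑ x : ZMod (p ^ (n + 1)), F (u * x) :=
          (Fintype.sum_bijective _ hBij (fun x => F (u * x)) F (fun x => rfl)).symm
      _ = ∑ x : ZMod (p ^ (n + 1)), ψ u * F x := by simp_rw [hC]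
      _ = ψ u * ∑ x : ZMod (p ^ (n + 1)), F x := (Finset.mul_sum _ _ _).symm
  have hSum : ∑ x : ZMod (p ^ (n + 1)), F x = 0 := by
    have hz : (ψ u - 1) * ∑ x : ZMod (p ^ (n + 1)), F x = 0 := by linear_combination - hS
    rcases mul_eq_zero.mp hz with h' | h'
    · exact absurd (by linear_combination h' : ψ u = 1) hu
    · exact h'
  -- identify the original sum with ∑ F
  have hA : ∑ t ∈ Finset.Icc 1 (p ^ (n + 1)),
      ψ (t : ZMod (p ^ (n + 1))) *
        Complex.ofReal (Int.fract ((a : ℝ) * t / (p ^ (n + 1))) - 1 / 2) ^ 2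
      = ∑ x : ZMod (p ^ (n + 1)), F x := by
    apply Finset.sum_nbij' (i := fun t => ((t : ℕ) : ZMod (p ^ (n + 1))))
      (j := fun x : ZMod (p ^ (n + 1)) => if x = 0 then p ^ (n + 1) else x.val)
    · intro t ht; exact Finset.mem_univ _
    · intro x _
      by_cases hx : x = 0
      · rw [if_pos hx]; rw [Finset.mem_Icc]; omega
      · rw [if_neg hx, Finset.mem_Icc]
        constructor
        · refine Nat.one_le_iff_ne_zero.mpr fun h => hx ?_
          have h9 := ZMod.natCast_rightInverse x
          rwa [h, Nat.cast_zero, eq_comm] at h9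
        · exact (ZMod.val_lt x).le
    · intro t ht
      rw [Finset.mem_Icc] at ht
      by_cases hz : ((t : ℕ) : ZMod (p ^ (n + 1))) = 0
      · rw [if_pos hz]
        have hdd : p ^ (n + 1) ∣ t := (ZMod.natCast_eq_zero_iff t _).mp hz
        have := Nat.le_of_dvd (by omega) hdd
        omega
      · rw [if_neg hz, ZMod.val_natCast]
        have htN : t < p ^ (n + 1) := by
          rcases Nat.lt_or_ge t (p ^ (n + 1)) with h | h
          · exact h
          · exfalso; apply hz
            have h10 : t = p ^ (n + 1) := by omega
            rw [h10]; exact ZMod.natCast_self _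
        exact Nat.mod_eq_of_lt htN
    · intro x _
      by_cases hx : x = 0
      · rw [if_pos hx, hx, ZMod.natCast_self]
      · rw [if_neg hx]; exact ZMod.natCast_rightInverse x
    · intro t ht
      rw [hF]
      simp only
      congr 2
      have h11 : (M : ℤ) ∣ ((t : ℕ) : ℤ) - (((t : ℕ) : ZMod (p ^ (n + 1))).val : ℤ) := by
        rw [ZMod.val_natCast]
        have hMNdvdZ : (M : ℤ) ∣ ((p ^ (n + 1) : ℕ) : ℤ) := Int.natCast_dvd_natCast.mpr hMdvdN
        refine dvd_trans hMNdvdZ ⟨((t / (p ^ (n + 1)) : ℕ) : ℤ), ?_⟩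
        have h1 : ((p ^ (n + 1) : ℕ) : ℤ) * ((t / (p ^ (n + 1)) : ℕ) : ℤ) +
            ((t % (p ^ (n + 1)) : ℕ) : ℤ) = (t : ℤ) := by
          exact_mod_cast Nat.div_add_mod t (p ^ (n + 1))
        linarith
      rw [← fract_eq _ _ h11]
      norm_cast
  rw [hA, hSum]
end

section
/- Let p be an odd prime, ζ a primitive p^n-th root of unity (n ≥ 1), g a primitive root mod p^{n+1}, and m ≥ 1 with m ≤ n. For any r coprime to p, ∑_{q=0}^{p^m−1} ζ^{ind_g(qp^{n+1−m}+r)} = 0, where ind_g(x) is the discrete logarithm of x base g mod p^{n+1} (i.e., g^{ind_g(x)} ≡ x mod p^{n+1}). -/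
/-- Let `p` be an odd prime, `ζ` a primitive `p^n`-th root of unity (`n ≥ 1`),
    `g` a primitive root mod `p^(n+1)`, and `1 ≤ m ≤ n`.  If `ind` is a
    discrete logarithm base `g` mod `p^(n+1)`, then for every `r` coprime to
    `p` we have `∑_{q=0}^{p^m−1} ζ^{ind(q·p^{n+1−m}+r)} = 0`. -/
theorem sum_zeta_ind_eq_zero (p n m : ℕ) (hp : p.Prime) (hodd : Odd p)
    (hn : 1 ≤ n) (hm : 1 ≤ m) (hmn : m ≤ n)
    (ζ : ℂ) (hζ : IsPrimitiveRoot ζ (p ^ n))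
    (g : ℕ)
    (hg : ∀ x : ZMod (p ^ (n + 1)), IsUnit x →
      ∃ k : ℕ, (g : ZMod (p ^ (n + 1))) ^ k = x)
    (ind : ℕ → ℕ)
    (hind : ∀ x : ℕ, ¬ p ∣ x →
      (g : ZMod (p ^ (n + 1))) ^ (ind x) = (x : ZMod (p ^ (n + 1))))
    (r : ℕ) (hr : Nat.Coprime r p) :
    ∑ q ∈ Finset.range (p ^ m), ζ ^ (ind (q * p ^ (n + 1 - m) + r)) = 0 := by
  have hp2 : 2 ≤ p := hp.two_le
  have hp3 : 3 ≤ p := by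
    rcases Nat.lt_or_ge p 3 with h | h
    · exfalso; rcases hodd with ⟨k, hk⟩; omega
    · exact h
  set N := p ^ (n + 1) with hN
  haveI : NeZero N := ⟨pow_ne_zero _ hp.pos.ne'⟩
  haveI : NeZero (p ^ m) := ⟨pow_ne_zero _ hp.pos.ne'⟩
  have hNbig : 2 < N := lt_of_lt_of_le (by omega) (Nat.le_self_pow (by omega) p)
  haveI : Fact (2 < N) := ⟨hNbig⟩
  have hrp : ¬ p ∣ r := hp.coprime_iff_not_dvd.mp hr.symm
  have hpN : p ∣ N := dvd_pow_self p (Nat.succ_ne_zero n)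
  -- g is a unit mod N
  have hNm1 : ¬ p ∣ (N - 1) := by
    intro h
    have h1 : p ∣ N - (N - 1) := Nat.dvd_sub hpN h
    have h2 : N - (N - 1) = 1 := by omega
    rw [h2] at h1
    exact absurd (Nat.le_of_dvd one_pos h1) (by omega)
  have hcastN : ((N - 1 : ℕ) : ZMod N) = -1 := by
    have h1 : 1 ≤ N := by omega
    push_cast [Nat.cast_sub h1]
    simp
  have hk := hind (N - 1) hNm1
  rw [hcastN] at hk
  have hkne : ind (N - 1) ≠ 0 := by
    intro h; rw [h, pow_zero] at hk
    exact ZMod.neg_one_ne_one hk.symm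
  have hgu : IsUnit (g : ZMod N) := by
    refine IsUnit.of_pow_eq_one (n := 2 * ind (N - 1)) ?_ (by omega)
    rw [two_mul, pow_add, hk, neg_one_mul, neg_neg]
  set u : (ZMod N)ˣ := hgu.unit with hu
  have huval : (u : ZMod N) = (g : ZMod N) := hgu.unit_spec
  -- u generates the unit group, so its order is the full cardinality
  have hord : orderOf u = Fintype.card (ZMod N)ˣ := by
    rw [← Nat.card_eq_fintype_card]
    apply orderOf_eq_card_of_forall_mem_zpowers
    intro x
    obtain ⟨k, hk'⟩ := hg x x.isUnit
    refine ⟨(k : ℤ), ?_⟩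
    show u ^ (k : ℤ) = x
    rw [zpow_natCast]
    ext
    rw [Units.val_pow_eq_pow_val, huval, hk']
  have hcard : Fintype.card (ZMod N)ˣ = p ^ n * (p - 1) := by
    rw [ZMod.card_units_eq_totient, hN, Nat.totient_prime_pow hp (Nat.succ_pos n)]
    simp
  have hdvdord : p ^ n ∣ orderOf u := by
    rw [hord, hcard]; exact Dvd.intro _ rfl
  have hz1 : ζ ^ (p ^ n) = 1 := hζ.pow_eq_one
  -- key congruence lemma
  have key : ∀ a b : ℕ, (g : ZMod N) ^ a = (g : ZMod N) ^ b → ζ ^ a = ζ ^ b := by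
    intro a b hab
    have hu' : u ^ a = u ^ b := by
      ext; rw [Units.val_pow_eq_pow_val, Units.val_pow_eq_pow_val, huval, hab]
    have hmod : a ≡ b [MOD orderOf u] := pow_eq_pow_iff_modEq.mp hu'
    have hmod' : a ≡ b [MOD p ^ n] := hmod.of_dvd hdvdord
    rw [pow_eq_pow_mod a hz1, pow_eq_pow_mod b hz1, hmod']
  -- coprimality facts
  have hcopgN : Nat.Coprime g N := (ZMod.isUnit_iff_coprime g N).mp hgu
  have hcopgp : Nat.Coprime g p :=
    Nat.Coprime.coprime_dvd_right (dvd_pow_self p (Nat.succ_ne_zero n)) hcopgN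
  set P := p ^ (n + 1 - m) with hP
  set e := p ^ (n - m) * (p - 1) with he
  have hPpos : 1 < P :=
    lt_of_lt_of_le (by omega) (Nat.le_self_pow (by omega) p)
  -- Euler: g^e ≡ 1 mod P
  have heuler : g ^ e ≡ 1 [MOD P] := by
    have htot : P.totient = e := by
      rw [hP, Nat.totient_prime_pow hp (by omega : 0 < n + 1 - m), he]
      congr 2
      omega
    rw [← htot]
    exact Nat.ModEq.pow_totient (hcopgp.pow_right _)
  have hgne : g ≠ 0 := by
    intro h; rw [h] at hcopgp; simp [Nat.coprime_zero_left] at hcopgp; omega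
  have hge1 : 1 ≤ g ^ e := Nat.one_le_iff_ne_zero.mpr (pow_ne_zero _ hgne)
  obtain ⟨t, ht⟩ : ∃ t, g ^ e = t * P + 1 := by
    obtain ⟨t, ht⟩ := (Nat.modEq_iff_dvd' hge1).mp heuler.symm
    rw [mul_comm] at ht
    exact ⟨t, by omega⟩
  set pm := p ^ m with hpm
  have hNfact : pm * P = N := by rw [hpm, hP, hN, ← pow_add]; congr 1; omega
  have hpP : p ∣ P := dvd_pow_self p (by omega : n + 1 - m ≠ 0)
  have hnd : ∀ v : ℕ, ¬ p ∣ v * P + r := by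
    intro v hv
    have : p ∣ v * P := Dvd.dvd.mul_left hpP v
    exact hrp ((Nat.dvd_add_right this).mp hv)
  -- rewrite the sum over `ZMod pm`
  set f : ℕ → ℂ := fun v => ζ ^ ind (v * P + r) with hf
  have hsum1 : ∑ q ∈ Finset.range pm, ζ ^ ind (q * P + r)
      = ∑ x : ZMod pm, f x.val := by
    refine Finset.sum_nbij' (fun q => (q : ZMod pm)) (fun x => x.val)
      (fun a _ => Finset.mem_univ _)
      (fun x _ => Finset.mem_range.mpr (ZMod.val_lt x))
      (fun a ha => ZMod.val_cast_of_lt (Finset.mem_range.mp ha))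
      (fun x _ => ZMod.natCast_rightInverse x)
      (fun a ha => ?_)
    rw [hf]
    simp only
    rw [ZMod.val_cast_of_lt (Finset.mem_range.mp ha)]
  -- the multiplier
  set a : ZMod pm := ((g ^ e : ℕ) : ZMod pm) with ha
  set b : ZMod pm := ((t * r : ℕ) : ZMod pm) with hb
  have hau : IsUnit a := by
    rw [ha]
    exact (ZMod.isUnit_iff_coprime _ _).mpr ((hcopgp.pow_left _).pow_right _)
  set ψ : Equiv.Perm (ZMod pm) := (Units.mulLeft hau.unit).trans (Equiv.addRight b) with hψ
  have hψx : ∀ x : ZMod pm, ψ x = a * x + b := by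
    intro x
    simp [hψ, Units.mulLeft, hau.unit_spec]
  -- per-term relation
  have hterm : ∀ x : ZMod pm, f ((ψ x).val) = ζ ^ e * f x.val := by
    intro x
    rw [hf]
    simp only
    rw [← pow_add]
    apply key
    rw [hind _ (hnd _), pow_add, hind _ (hnd _)]
    -- goal: ((ψ x).val * P + r : ZMod N) = g^e * (x.val * P + r : cast)
    have hval : (ψ x).val = (g ^ e * x.val + t * r) % pm := by
      rw [hψx]
      have hx : a * x + b = ((g ^ e * x.val + t * r : ℕ) : ZMod pm) := by
        rw [ha, hb]
        push_cast [ZMod.natCast_val, ZMod.cast_id]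
        ring
      rw [hx, ZMod.val_natCast]
    have hcong : (ψ x).val * P + r ≡ g ^ e * (x.val * P + r) [MOD N] := by
      have h1 : (ψ x).val ≡ g ^ e * x.val + t * r [MOD pm] := by
        rw [hval]; exact (Nat.mod_modEq _ _)
      have h2 : (ψ x).val * P ≡ (g ^ e * x.val + t * r) * P [MOD pm * P] :=
        Nat.ModEq.mul_right' P h1
      rw [hNfact] at h2
      have h3 : g ^ e * (x.val * P + r) = (g ^ e * x.val + t * r) * P + r := by
        rw [ht]; ring
      rw [h3]
      exact h2.add_right r
    have h4 := (ZMod.natCast_eq_natCast_iff _ _ _).mpr hcong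
    push_cast at h4 ⊢
    exact h4
  -- reindex by ψ
  have hsum2 : ∑ x : ZMod pm, f ((ψ x).val) = ∑ x : ZMod pm, f x.val :=
    Equiv.sum_comp ψ (fun x => f x.val)
  have hS : ∑ x : ZMod pm, f x.val = ζ ^ e * ∑ x : ZMod pm, f x.val := by
    calc ∑ x : ZMod pm, f x.val = ∑ x : ZMod pm, f ((ψ x).val) := hsum2.symm
    _ = ∑ x : ZMod pm, ζ ^ e * f x.val := by
        exact Finset.sum_congr rfl (fun x _ => hterm x)
    _ = ζ ^ e * ∑ x : ZMod pm, f x.val := by rw [Finset.mul_sum]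
  have hξ : (ζ : ℂ) ^ e ≠ 1 := by
    intro h
    have hd : p ^ n ∣ e := (hζ.pow_eq_one_iff_dvd e).mp h
    rw [he] at hd
    have hfac : p ^ n = p ^ (n - m) * p ^ m := by rw [← pow_add]; congr 1; omega
    rw [hfac] at hd
    have hd2 : p ^ m ∣ (p - 1) :=
      (mul_dvd_mul_iff_left (pow_ne_zero (n - m) hp.pos.ne')).mp hd
    have hd3 : p ∣ (p - 1) := dvd_trans (dvd_pow_self p (by omega : m ≠ 0)) hd2
    have := Nat.le_of_dvd (by omega) hd3
    omega
  have hzero : ∑ x : ZMod pm, f x.val = 0 := by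
    have h := hS
    have h2 : (ζ ^ e - 1) * ∑ x : ZMod pm, f x.val = 0 := by
      rw [sub_mul, one_mul, ← h, sub_self]
    rcases mul_eq_zero.mp h2 with h3 | h3
    · exact absurd (by linear_combination h3 : ζ ^ e = 1) hξ
    · exact h3
  rw [hsum1, hzero]
end

section
/- Let K be a real quadratic field with no units of negative norm, ε > 1 the generator of the group of totally positive units, and suppose ε^a ≡ b (mod p^{n+1}) for integers a, b with p an odd prime unramified in K. Then b ≡ 1 or b ≡ −1 (mod p^{n+1}). -/
open NumberField

lemma norm_dvd_sub_of_dvd_sub {K : Type*} [Field K] [NumberField K]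
    (m : ℤ) (x y : 𝓞 K) (h : (m : 𝓞 K) ∣ x - y) :
    m ∣ Algebra.norm ℤ x - Algebra.norm ℤ y := by
  classical
  obtain ⟨t, ht⟩ := h
  let B := Module.Free.chooseBasis ℤ (𝓞 K)
  rw [Algebra.norm_eq_matrix_det B, Algebra.norm_eq_matrix_det B]
  have hxy : x - y = m • t := by rw [ht]; simp [zsmul_eq_mul]
  have hM : Algebra.leftMulMatrix B x - Algebra.leftMulMatrix B y
      = m • Algebra.leftMulMatrix B t := by
    rw [← map_sub, hxy, map_zsmul]
  rw [← Int.natAbs_dvd]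
  rw [← ZMod.intCast_zmod_eq_zero_iff_dvd]
  have key : (Algebra.leftMulMatrix B x).map (⇑(Int.castRingHom (ZMod m.natAbs)))
      = (Algebra.leftMulMatrix B y).map (⇑(Int.castRingHom (ZMod m.natAbs))) := by
    ext i j
    have hentry : Algebra.leftMulMatrix B x i j - Algebra.leftMulMatrix B y i j
        = m * Algebra.leftMulMatrix B t i j := by
      have := congrFun (congrFun hM i) j
      simpa [Matrix.sub_apply, Matrix.smul_apply, zsmul_eq_mul] using this
    have h0 : ((m * Algebra.leftMulMatrix B t i j : ℤ) : ZMod m.natAbs) = 0 := by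
      rw [ZMod.intCast_zmod_eq_zero_iff_dvd]
      exact Dvd.dvd.mul_right (Int.natAbs_dvd.mpr dvd_rfl) _
    have := congrArg (⇑(Int.castRingHom (ZMod m.natAbs))) hentry
    simp only [Matrix.map_apply]
    simp only [Int.coe_castRingHom] at this ⊢
    push_cast at this h0
    linear_combination this + h0
  have hdet := congrArg Matrix.det key
  rw [← RingHom.mapMatrix_apply, ← RingHom.mapMatrix_apply, ← RingHom.map_det,
    ← RingHom.map_det] at hdet
  rw [Int.cast_sub]
  rw [sub_eq_zero]
  simpa using hdet

/-- Let `K` be a real quadratic number field with no units of negative norm,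
    `ε > 1` the generator of the group of totally positive units, and `p` an
    odd prime unramified in `K`.  If `ε^a ≡ b (mod p^(n+1))` in `𝓞 K` for
    integers `a, b`, then `b ≡ 1` or `b ≡ −1 (mod p^(n+1))`. -/
theorem unit_power_congruent_int (K : Type*) [Field K] [NumberField K]
    (hdeg : Module.finrank ℚ K = 2) (φ : K →+* ℝ)
    (p : ℕ) (hp : p.Prime) (hodd : Odd p)
    (hunram : ¬ (p : ℤ) ∣ NumberField.discr K)
    (hnoneg : ∀ u : (𝓞 K)ˣ, Algebra.norm ℤ ((u : 𝓞 K)) = 1)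
    (ε : (𝓞 K)ˣ)
    (hpos : 1 < φ (algebraMap (𝓞 K) K (ε : 𝓞 K)))
    (hgen : ∀ v : (𝓞 K)ˣ, ∃ k : ℤ, v = ε ^ k ∨ v = -ε ^ k)
    (a n : ℕ) (b : ℤ)
    (hcong : ((ε : 𝓞 K)) ^ a - (b : 𝓞 K) ∈
      Ideal.span {((p : 𝓞 K)) ^ (n + 1)}) :
    (p : ℤ) ^ (n + 1) ∣ (b - 1) ∨ (p : ℤ) ^ (n + 1) ∣ (b + 1) := by
  have hprime : Prime (p : ℤ) := Nat.prime_iff_prime_int.mp hp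
  have hdvd : ((p : 𝓞 K)) ^ (n + 1) ∣ (ε : 𝓞 K) ^ a - (b : 𝓞 K) :=
    Ideal.mem_span_singleton.mp hcong
  have hdvd' : (((p : ℤ) ^ (n + 1) : ℤ) : 𝓞 K) ∣ (ε : 𝓞 K) ^ a - (b : 𝓞 K) := by
    push_cast
    exact hdvd
  have hnorm := norm_dvd_sub_of_dvd_sub ((p : ℤ) ^ (n + 1)) _ _ hdvd'
  have h1 : Algebra.norm ℤ ((ε : 𝓞 K) ^ a) = 1 := by
    rw [map_pow, hnoneg ε, one_pow]
  have h2 : Algebra.norm ℤ ((b : 𝓞 K)) = b ^ 2 := by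
    have hb : ((b : 𝓞 K)) = algebraMap ℤ (𝓞 K) b := by
      simp [algebraMap_int_eq, eq_intCast]
    rw [hb, Algebra.norm_algebraMap_of_basis (Module.Free.chooseBasis ℤ (𝓞 K)),
      ← Module.finrank_eq_card_chooseBasisIndex, NumberField.RingOfIntegers.rank, hdeg]
  rw [h1, h2] at hnorm
  have hprod : (p : ℤ) ^ (n + 1) ∣ (b - 1) * (b + 1) := by
    have hr : (b - 1) * (b + 1) = -(1 - b ^ 2) := by ring
    rw [hr]
    exact hnorm.neg_right
  by_cases hc : (p : ℤ) ∣ b - 1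
  · left
    have hnc : ¬ (p : ℤ) ∣ b + 1 := by
      intro h2'
      have h2'' : (p : ℤ) ∣ 2 := by
        have hsub := dvd_sub h2' hc
        have : (b + 1) - (b - 1) = 2 := by ring
        rwa [this] at hsub
      have hple : (p : ℤ) ≤ 2 := Int.le_of_dvd (by norm_num) h2''
      have hple' : p ≤ 2 := by exact_mod_cast hple
      have hpe : p = 2 := le_antisymm hple' hp.two_le
      rw [hpe] at hodd
      exact (by decide : ¬ Odd 2) hodd
    have hcop : IsCoprime ((p : ℤ) ^ (n + 1)) (b + 1) :=
      IsCoprime.pow_left ((hprime.coprime_iff_not_dvd).mpr hnc)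
    exact hcop.dvd_of_dvd_mul_right hprod
  · right
    have hcop : IsCoprime ((p : ℤ) ^ (n + 1)) (b - 1) :=
      IsCoprime.pow_left ((hprime.coprime_iff_not_dvd).mpr hc)
    exact hcop.dvd_of_dvd_mul_left hprod
end

section
/- Let p be an odd prime, f(T) = a₀ + a₁T + ⋯ ∈ ℤ_p[[T]] a power series with μ-invariant 0 (some coefficient is a p-adic unit) and λ-invariant λ (the least index i with a_i a unit). If ζ is a primitive p^n-th root of unity with φ(p^n) > λ, then the p-adic valuation of f(ζ − 1) (normalized so ord_p(p) = 1, extended to ℚ_p(ζ)) equals λ/φ(p^n). -/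
/-- Let `p` be an odd prime and `f(T) = ∑ aᵢTⁱ ∈ ℤ_p[[T]]` a power series with
    `μ`-invariant 0 and `λ`-invariant `lam` (i.e. `a_lam` is the first unit
    coefficient).  If `ζ` is a primitive `p^n`-th root of unity (in a complete
    nonarchimedean extension of `ℚ_p`, with `ord_p(ζ−1) = 1/φ(p^n)`) and
    `φ(p^n) > lam`, then `ord_p f(ζ−1) = lam/φ(p^n)`, i.e.
    `‖f(ζ−1)‖ = p^{−lam/φ(p^n)}`. -/
theorem padic_valuation_powerseries_at_zeta_sub_one
    (p : ℕ) [hp : Fact p.Prime] (hodd : Odd p) (n : ℕ) (hn : 1 ≤ n)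
    (K : Type*) [NormedField K] [CompleteSpace K] [IsUltrametricDist K]
    [Algebra ℚ_[p] K]
    (hcompat : ∀ x : ℚ_[p], ‖algebraMap ℚ_[p] K x‖ = ‖x‖)
    (ζ : K) (hζ : IsPrimitiveRoot ζ (p ^ n))
    (hζ1 : ‖ζ - 1‖ = (p : ℝ) ^ (-(1 : ℝ) / (Nat.totient (p ^ n) : ℝ)))
    (a : ℕ → ℤ_[p]) (lam : ℕ)
    (hunit : IsUnit (a lam)) (hmin : ∀ i, i < lam → ¬ IsUnit (a i))
    (hlt : lam < Nat.totient (p ^ n)) :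
    ‖∑' i : ℕ, algebraMap ℚ_[p] K ((a i : ℚ_[p])) * (ζ - 1) ^ i‖ =
      (p : ℝ) ^ (-(lam : ℝ) / (Nat.totient (p ^ n) : ℝ)) := by
  have hp1 : (1 : ℝ) < (p : ℝ) := by exact_mod_cast hp.out.one_lt
  have hp0 : (0 : ℝ) < (p : ℝ) := lt_trans one_pos hp1
  set q : ℕ := Nat.totient (p ^ n) with hq
  have hq0 : 0 < q := Nat.totient_pos.mpr (pow_pos hp.out.pos n)
  have hqR : (0 : ℝ) < (q : ℝ) := by exact_mod_cast hq0
  set e : ℝ := (p : ℝ) ^ (-(1 : ℝ) / (q : ℝ)) with he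
  have he0 : 0 < e := Real.rpow_pos_of_pos hp0 _
  have he1 : e < 1 := by
    rw [he]
    apply Real.rpow_lt_one_of_one_lt_of_neg hp1
    rw [div_neg_iff]; right; constructor <;> [norm_num; exact hqR]
  -- norms of terms
  set t : ℕ → K := fun i => algebraMap ℚ_[p] K ((a i : ℚ_[p])) * (ζ - 1) ^ i with ht
  have hnorm : ∀ i, ‖t i‖ = ‖a i‖ * e ^ i := by
    intro i
    rw [ht]
    simp only [norm_mul, norm_pow, hζ1, hcompat]
    rw [PadicInt.padic_norm_e_of_padicInt]
  have hei : ∀ i : ℕ, e ^ i = (p : ℝ) ^ (-(i : ℝ) / (q : ℝ)) := by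
    intro i
    rw [he, ← Real.rpow_natCast ((p:ℝ) ^ (-(1:ℝ)/(q:ℝ))) i, ← Real.rpow_mul hp0.le]
    congr 1; field_simp
  -- summability
  have hsum : Summable t := by
    apply Summable.of_norm_bounded (summable_geometric_of_lt_one he0.le he1)
    intro i
    rw [hnorm]
    calc ‖a i‖ * e ^ i ≤ 1 * e ^ i := by
          apply mul_le_mul_of_nonneg_right (PadicInt.norm_le_one _) (pow_nonneg he0.le i)
      _ = e ^ i := one_mul _
  -- key norms
  have htlam : ‖t lam‖ = e ^ lam := by
    rw [hnorm, PadicInt.isUnit_iff.mp hunit, one_mul]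
  have hsmall : ∀ i, i ≠ lam → ‖t i‖ < e ^ lam := by
    intro i hi
    rw [hnorm]
    rcases lt_or_gt_of_ne hi with h | h
    · -- i < lam : ‖a i‖ ≤ p⁻¹
      have hna : ‖a i‖ ≤ (p : ℝ)⁻¹ := by
        have := (PadicInt.norm_le_pow_iff_norm_lt_pow_add_one (a i) (-1)).mpr ?_
        · simpa using this
        · simpa using PadicInt.not_isUnit_iff.mp (hmin i h)
      calc ‖a i‖ * e ^ i ≤ (p : ℝ)⁻¹ * 1 := by
            apply mul_le_mul hna (pow_le_one₀ he0.le he1.le) (pow_nonneg he0.le i)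
              (by positivity)
        _ = (p : ℝ)⁻¹ := mul_one _
        _ < e ^ lam := by
            rw [hei, ← Real.rpow_neg_one (p : ℝ)]
            apply Real.rpow_lt_rpow_left_iff hp1 |>.mpr
            rw [neg_div, neg_lt_neg_iff, div_lt_one hqR]
            exact_mod_cast hlt
    · -- i > lam
      calc ‖a i‖ * e ^ i ≤ 1 * e ^ i := by
            apply mul_le_mul_of_nonneg_right (PadicInt.norm_le_one _) (pow_nonneg he0.le i)
        _ = e ^ i := one_mul _
        _ < e ^ lam := pow_lt_pow_right_of_lt_one₀ he0 he1 h
  -- split off the lam term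
  have hsplit := Summable.tsum_eq_add_tsum_ite hsum lam
  rw [show ∑' i : ℕ, algebraMap ℚ_[p] K ((a i : ℚ_[p])) * (ζ - 1) ^ i = ∑' i, t i from rfl,
    hsplit]
  set C : ℝ := max ((p:ℝ)⁻¹) (e ^ (lam + 1)) with hCdef
  have hC0 : 0 ≤ C := le_max_of_le_left (by positivity)
  have hClt : C < e ^ lam := by
    apply max_lt
    · rw [hei, ← Real.rpow_neg_one (p : ℝ)]
      apply Real.rpow_lt_rpow_left_iff hp1 |>.mpr
      rw [neg_div, neg_lt_neg_iff, div_lt_one hqR]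
      exact_mod_cast hlt
    · exact pow_lt_pow_right_of_lt_one₀ he0 he1 (Nat.lt_succ_self lam)
  have hrest : ‖∑' i, if i = lam then 0 else t i‖ < e ^ lam := by
    refine lt_of_le_of_lt (IsUltrametricDist.norm_tsum_le_of_forall_le_of_nonneg hC0 ?_) hClt
    intro i
    by_cases hi : i = lam
    · simpa [hi] using hC0
    · rw [if_neg hi, hnorm]
      rcases lt_or_gt_of_ne hi with h | h
      · have hna : ‖a i‖ ≤ (p : ℝ)⁻¹ := by
          have := (PadicInt.norm_le_pow_iff_norm_lt_pow_add_one (a i) (-1)).mpr ?_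
          · simpa using this
          · simpa using PadicInt.not_isUnit_iff.mp (hmin i h)
        refine le_max_of_le_left ?_
        calc ‖a i‖ * e ^ i ≤ (p : ℝ)⁻¹ * 1 := by
              apply mul_le_mul hna (pow_le_one₀ he0.le he1.le) (pow_nonneg he0.le i)
                (by positivity)
          _ = (p : ℝ)⁻¹ := mul_one _
      · refine le_max_of_le_right ?_
        calc ‖a i‖ * e ^ i ≤ 1 * e ^ i := by
              apply mul_le_mul_of_nonneg_right (PadicInt.norm_le_one _) (pow_nonneg he0.le i)
          _ = e ^ i := one_mul _
          _ ≤ e ^ (lam + 1) := pow_le_pow_of_le_one he0.le he1.le h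
  have hne : ‖t lam‖ ≠ ‖∑' i, if i = lam then 0 else t i‖ := by
    rw [htlam]; exact ne_of_gt hrest
  rw [IsUltrametricDist.norm_add_eq_max_of_norm_ne_norm hne, max_eq_left
    (by rw [htlam]; exact hrest.le), htlam, hei]
end
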